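/- arXiv:1202.6545 — 4 statements merged into one kernel-verified Lean document; each statement's English description precedes it below -/
import Mathlib

section
/- In a hidden Markov tree model, the global conditional entropy of the state tree given the observations is bounded above by the sum over all vertices of the entropies of each state conditioned on its children states: H(S | X = x) ≤ Σ_{u∈U} H(S_u | S_{c(u)}, X = x), where the term for a leaf vertex u is H(S_u | X = x). -/
/-- A hidden Markov tree (HMT) model on a finite rooted tree with `n` vertices:
the root is `0` and the vertices are indexed in a topological order, i.e. every
non-root vertex has a parent with strictly smaller index.  The model has `J`
states and observation alphabet `{0, …, V-1}`, with initial probabilities (for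
the root), transition probabilities and emission probabilities. -/
structure HMTModel (J V n : ℕ) [NeZero n] where
  parent : Fin n → Fin n
  parent_lt : ∀ u : Fin n, u ≠ 0 → parent u < u
  init : Fin J → ℝ
  trans : Fin J → Fin J → ℝ
  emit : Fin J → Fin V → ℝ
  init_nonneg : ∀ j, 0 ≤ init j
  init_sum : ∑ j, init j = 1
  trans_nonneg : ∀ i j, 0 ≤ trans i j
  trans_sum : ∀ i, ∑ j, trans i j = 1
  emit_nonneg : ∀ j y, 0 ≤ emit j y
  emit_sum : ∀ j, ∑ y, emit j y = 1

namespace HMTModel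

variable {J V n : ℕ} [NeZero J] [NeZero n]

/-- The joint law of the state tree and the observed tree:
`P(S = s, X = x) = π_{s_0} (∏_{u ≠ 0} p_{s_{ρ(u)} s_u}) ∏_u b_{s_u}(x_u)`. -/
noncomputable def joint (M : HMTModel J V n) (s : Fin n → Fin J) (x : Fin n → Fin V) : ℝ :=
  M.init (s 0) *
    (∏ u ∈ Finset.univ.filter (fun u : Fin n => u ≠ 0), M.trans (s (M.parent u)) (s u)) *
    ∏ u : Fin n, M.emit (s u) (x u)

open Classical in
/-- Probability of an event on (state tree, observed tree). -/
noncomputable def pr (M : HMTModel J V n)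
    (E : (Fin n → Fin J) → (Fin n → Fin V) → Prop) : ℝ :=
  ∑ s : Fin n → Fin J, ∑ y : Fin n → Fin V, if E s y then M.joint s y else 0

/-- Conditional probability `P(A | B)`; it is `0` when the conditioning event
has probability zero. -/
noncomputable def cpr (M : HMTModel J V n)
    (A B : (Fin n → Fin J) → (Fin n → Fin V) → Prop) : ℝ :=
  if 0 < M.pr B then M.pr (fun s y => A s y ∧ B s y) / M.pr B else 0

/-- Entropy of the random vector `f(S)` given the event `E`
(natural logarithm, with the convention `0 log 0 = 0`). -/
noncomputable def condEnt (M : HMTModel J V n) {α : Type*} [Fintype α]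
    (f : (Fin n → Fin J) → α)
    (E : (Fin n → Fin J) → (Fin n → Fin V) → Prop) : ℝ :=
  -∑ a : α, M.cpr (fun s _ => f s = a) E * Real.log (M.cpr (fun s _ => f s = a) E)

/-- Entropy of `f(S)` given the random vector `g(S)` and the event `E`:
`H(f(S) | g(S), E) = ∑_c P(g(S) = c | E) H(f(S) | g(S) = c, E)`. -/
noncomputable def condEntGiven (M : HMTModel J V n) {α β : Type*} [Fintype α] [Fintype β]
    (f : (Fin n → Fin J) → α) (g : (Fin n → Fin J) → β)
    (E : (Fin n → Fin J) → (Fin n → Fin V) → Prop) : ℝ :=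
  ∑ c : β, M.cpr (fun s _ => g s = c) E * M.condEnt f (fun s y => g s = c ∧ E s y)

/-- The event `X = x`. -/
def obsEq (x : Fin n → Fin V) : (Fin n → Fin J) → (Fin n → Fin V) → Prop :=
  fun _ y => y = x

/-- `v` belongs to the complete subtree rooted at `u` (i.e. `u` is obtained
from `v` by repeatedly taking parents). -/
def inSubtree (M : HMTModel J V n) (u v : Fin n) : Prop :=
  Relation.ReflTransGen (fun a b : Fin n => a ≠ 0 ∧ M.parent a = b) v u

open Classical in
/-- The state subtree `S̄_u` rooted at `u` (coordinates outside the subtree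
are padded by `0`). -/
noncomputable def subVar (M : HMTModel J V n) (u : Fin n) (s : Fin n → Fin J) :
    Fin n → Fin J :=
  fun v => if M.inSubtree u v then s v else 0

open Classical in
/-- The collection `S̄_{c(u)}` of state subtrees rooted at the children of `u`
(all other coordinates padded by `0`). -/
noncomputable def childSubVar (M : HMTModel J V n) (u : Fin n) (s : Fin n → Fin J) :
    Fin n → Fin J :=
  fun v => if M.inSubtree u v ∧ v ≠ u then s v else 0

/-- The states `S_{c(u)}` of the children of `u` (all other coordinates padded
by `0`). -/
def childVar (M : HMTModel J V n) (u : Fin n) (s : Fin n → Fin J) :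
    Fin n → Fin J :=
  fun v => if v ≠ 0 ∧ M.parent v = u then s v else 0

/-- The states `(S_v)_{v ∈ Vs}` of a subset `Vs` of vertices (all other
coordinates padded by `0`). -/
def memVar (_M : HMTModel J V n) (Vs : Finset (Fin n)) (s : Fin n → Fin J) :
    Fin n → Fin J :=
  fun v => if v ∈ Vs then s v else 0

end HMTModel

open HMTModel


namespace HMTAux
open Real Finset

variable {Ω : Type*} [Fintype Ω]

open Classical in
noncomputable def mass (w : Ω → ℝ) (B : Ω → Prop) : ℝ := ∑ s, if B s then w s else 0

noncomputable def cp (w : Ω → ℝ) (A B : Ω → Prop) : ℝ :=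
  if 0 < mass w B then mass w (fun s => A s ∧ B s) / mass w B else 0

noncomputable def ce (w : Ω → ℝ) {α : Type*} [Fintype α] (f : Ω → α) (B : Ω → Prop) : ℝ :=
  ∑ a, negMulLog (cp w (fun s => f s = a) B)

noncomputable def ceg (w : Ω → ℝ) {α β : Type*} [Fintype α] [Fintype β]
    (f : Ω → α) (g : Ω → β) (B : Ω → Prop) : ℝ :=
  ∑ c, cp w (fun s => g s = c) B * ce w f (fun s => g s = c ∧ B s)

variable {w : Ω → ℝ} {A B A' B' : Ω → Prop}

lemma mass_congr (h : ∀ s, B s ↔ B' s) : mass w B = mass w B' := by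
  classical
  unfold mass
  exact Finset.sum_congr rfl fun s _ => by simp only [h s]

lemma mass_nonneg (hw : ∀ s, 0 ≤ w s) (B : Ω → Prop) : 0 ≤ mass w B := by
  classical
  unfold mass
  exact Finset.sum_nonneg fun s _ => by split <;> simp [hw s]

lemma mass_mono (hw : ∀ s, 0 ≤ w s) (h : ∀ s, A s → B s) : mass w A ≤ mass w B := by
  classical
  unfold mass
  refine Finset.sum_le_sum fun s _ => ?_
  by_cases hA : A s
  · simp [hA, h s hA]
  · simp only [if_neg hA]
    split <;> simp [hw s]

lemma mass_and_eq_zero (hw : ∀ s, 0 ≤ w s) (h : ¬ 0 < mass w B) :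
    mass w (fun s => A s ∧ B s) = 0 :=
  le_antisymm (le_trans (mass_mono hw fun s hs => hs.2) (not_lt.1 h)) (mass_nonneg hw _)

lemma cp_nonneg (hw : ∀ s, 0 ≤ w s) : 0 ≤ cp w A B := by
  unfold cp
  split
  · exact div_nonneg (mass_nonneg hw _) (le_of_lt ‹_›)
  · exact le_rfl

lemma cp_le_one (hw : ∀ s, 0 ≤ w s) : cp w A B ≤ 1 := by
  unfold cp
  split
  · exact div_le_one_of_le₀ (mass_mono hw fun s hs => hs.2) (le_of_lt ‹_›)
  · exact zero_le_one

lemma cp_congr (hA : ∀ s, A s ↔ A' s) (hB : ∀ s, B s ↔ B' s) : cp w A B = cp w A' B' := by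
  unfold cp
  rw [mass_congr hB, mass_congr (fun s => and_congr (hA s) (hB s))]

lemma cp_eq_zero (hw : ∀ s, 0 ≤ w s) (h : mass w (fun s => A s ∧ B s) = 0) : cp w A B = 0 := by
  unfold cp
  split <;> simp [h]

lemma ce_congr {α : Type*} [Fintype α] (f : Ω → α) (hB : ∀ s, B s ↔ B' s) :
    ce w f B = ce w f B' := by
  unfold ce
  exact Finset.sum_congr rfl fun a _ => by rw [cp_congr (fun s => Iff.rfl) hB]

lemma mass_fiber {β γ : Type*} [Fintype β] [DecidableEq γ] (g : Ω → β) (h : β → γ) (c' : γ)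
    (B : Ω → Prop) :
    ∑ c ∈ Finset.univ.filter (fun c => h c = c'), mass w (fun s => g s = c ∧ B s)
      = mass w (fun s => h (g s) = c' ∧ B s) := by
  classical
  unfold mass
  rw [Finset.sum_comm]
  refine Finset.sum_congr rfl fun s _ => ?_
  by_cases hBs : B s
  · simp only [hBs, and_true]
    rw [Finset.sum_ite_eq]
    simp
  · simp [hBs]

lemma mass_partition {α : Type*} [Fintype α] (f : Ω → α) (B : Ω → Prop) :
    ∑ a, mass w (fun s => f s = a ∧ B s) = mass w B := by
  classical
  have h1 := mass_fiber (w := w) f (fun _ : α => ()) () B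
  have h2 : mass w (fun s => () = () ∧ B s) = mass w B :=
    mass_congr (fun s => by simp)
  rw [h2] at h1
  rw [← h1]
  refine Finset.sum_congr ?_ fun a _ => rfl
  simp

lemma cp_sum {α : Type*} [Fintype α] (f : Ω → α) (B : Ω → Prop) :
    ∑ a, cp w (fun s => f s = a) B = if 0 < mass w B then 1 else 0 := by
  unfold cp
  split
  · rw [← Finset.sum_div, mass_partition, div_self (ne_of_gt ‹_›)]
  · simp


lemma cp_mul {α β : Type*} (hw : ∀ s, 0 ≤ w s) (f : Ω → α) (g : Ω → β) (a : α) (c : β)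
    (B : Ω → Prop) :
    cp w (fun s => (f s, g s) = (a, c)) B
      = cp w (fun s => g s = c) B * cp w (fun s => f s = a) (fun s => g s = c ∧ B s) := by
  have hpair : ∀ s, ((f s, g s) = (a, c)) ↔ (f s = a ∧ g s = c) := by
    intro s; simp [Prod.ext_iff]
  by_cases hB : 0 < mass w B
  · by_cases hC : 0 < mass w (fun s => g s = c ∧ B s)
    · unfold cp
      rw [if_pos hB, if_pos hB, if_pos hC]
      have h1 : mass w (fun s => ((f s, g s) = (a, c)) ∧ B s)
          = mass w (fun s => f s = a ∧ (g s = c ∧ B s)) :=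
        mass_congr (fun s => by rw [hpair s, and_assoc])
      rw [h1]
      field_simp
    · have h0 : mass w (fun s => g s = c ∧ B s) = 0 :=
        le_antisymm (not_lt.1 hC) (mass_nonneg hw _)
      have h1 : cp w (fun s => f s = a) (fun s => g s = c ∧ B s) = 0 := by
        unfold cp; rw [if_neg hC]
      rw [h1, mul_zero]
      apply cp_eq_zero hw
      refine le_antisymm ?_ (mass_nonneg hw _)
      calc mass w (fun s => ((f s, g s) = (a, c)) ∧ B s)
          ≤ mass w (fun s => g s = c ∧ B s) :=
            mass_mono hw (fun s hs => ⟨((hpair s).1 hs.1).2, hs.2⟩)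
        _ = 0 := h0
  · unfold cp
    rw [if_neg hB, if_neg hB, zero_mul]

lemma cp_cond_eq_zero (hw : ∀ s, 0 ≤ w s) {β : Type*} (g : Ω → β) (c : β) (B : Ω → Prop)
    (h : ¬ 0 < mass w (fun s => g s = c ∧ B s)) : cp w (fun s => g s = c) B = 0 :=
  cp_eq_zero hw (le_antisymm (not_lt.1 h) (mass_nonneg hw _))

lemma chain {α β : Type*} [Fintype α] [Fintype β] (hw : ∀ s, 0 ≤ w s)
    (f : Ω → α) (g : Ω → β) (B : Ω → Prop) :
    ce w (fun s => (f s, g s)) B = ce w g B + ceg w f g B := by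
  unfold ce ceg
  rw [Fintype.sum_prod_type, Finset.sum_comm]
  have key : ∀ c : β,
      (∑ a : α, negMulLog (cp w (fun s => (f s, g s) = (a, c)) B))
        = negMulLog (cp w (fun s => g s = c) B)
          + cp w (fun s => g s = c) B
            * ∑ a : α, negMulLog (cp w (fun s => f s = a) (fun s => g s = c ∧ B s)) := by
    intro c
    have h1 : ∀ a : α, negMulLog (cp w (fun s => (f s, g s) = (a, c)) B)
        = cp w (fun s => f s = a) (fun s => g s = c ∧ B s)
            * negMulLog (cp w (fun s => g s = c) B)
          + cp w (fun s => g s = c) B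
            * negMulLog (cp w (fun s => f s = a) (fun s => g s = c ∧ B s)) := by
      intro a
      rw [cp_mul hw, Real.negMulLog_mul]
    rw [Finset.sum_congr rfl (fun a _ => h1 a), Finset.sum_add_distrib, ← Finset.sum_mul,
      ← Finset.mul_sum, cp_sum]
    congr 1
    split
    · rw [one_mul]
    · rw [cp_cond_eq_zero hw g c B ‹_›, negMulLog_zero, zero_mul]
  rw [Finset.sum_congr rfl (fun c _ => key c), Finset.sum_add_distrib]
  rfl

lemma vanish {γ : Type*} [Fintype γ] [DecidableEq γ] (hw : ∀ s, 0 ≤ w s) (h : Ω → γ) (B : Ω → Prop) :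
    ∀ a ∉ Finset.univ.image h, negMulLog (cp w (fun s => h s = a) B) = 0 := by
  classical
  intro a ha
  have hno : ∀ s : Ω, ¬ (h s = a) := by
    intro s hs
    exact ha (Finset.mem_image.2 ⟨s, Finset.mem_univ s, hs⟩)
  have h0 : cp w (fun s => h s = a) B = 0 := by
    apply cp_eq_zero hw
    have : mass w (fun s => h s = a ∧ B s) = mass w (fun _ => False) :=
      mass_congr (fun s => by simp [hno s])
    rw [this]
    unfold mass
    simp
  rw [h0, negMulLog_zero]

lemma ce_comp {α β : Type*} [Fintype α] [Fintype β] (hw : ∀ s, 0 ≤ w s)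
    (f : Ω → α) (e : α → β) (d : β → α) (hd : ∀ s : Ω, d (e (f s)) = f s) (B : Ω → Prop) :
    ce w (fun s => e (f s)) B = ce w f B := by
  classical
  unfold ce
  rw [← Finset.sum_subset (Finset.subset_univ (Finset.univ.image f))
      (fun a _ ha => vanish hw f B a ha),
    ← Finset.sum_subset (Finset.subset_univ (Finset.univ.image (fun s => e (f s))))
      (fun a _ ha => vanish hw (fun s => e (f s)) B a ha)]
  refine Finset.sum_nbij' d e ?_ ?_ ?_ ?_ ?_
  · intro b hb
    obtain ⟨s, _, hs⟩ := Finset.mem_image.1 hb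
    exact Finset.mem_image.2 ⟨s, Finset.mem_univ s, by rw [← hs, hd]⟩
  · intro a ha
    obtain ⟨s, _, hs⟩ := Finset.mem_image.1 ha
    exact Finset.mem_image.2 ⟨s, Finset.mem_univ s, by rw [← hs]⟩
  · intro b hb
    obtain ⟨s, _, hs⟩ := Finset.mem_image.1 hb
    rw [← hs, hd]
  · intro a ha
    obtain ⟨s, _, hs⟩ := Finset.mem_image.1 ha
    rw [← hs, hd]
  · intro b hb
    obtain ⟨s, _, hs⟩ := Finset.mem_image.1 hb
    congr 1
    refine cp_congr (fun t => ?_) (fun _ => Iff.rfl)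
    show e (f t) = b ↔ f t = d b
    subst hs
    constructor
    · intro ht
      rw [← ht, hd]
    · intro ht
      rw [hd s] at ht
      exact congrArg e ht


lemma ce_const {α : Type*} [Fintype α] (hw : ∀ s, 0 ≤ w s) (a₀ : α) (B : Ω → Prop) :
    ce w (fun _ : Ω => a₀) B = 0 := by
  classical
  unfold ce
  refine Finset.sum_eq_zero fun a _ => ?_
  by_cases ha : a = a₀
  · subst ha
    have : cp w (fun _ : Ω => a = a) B = if 0 < mass w B then 1 else 0 := by
      unfold cp
      split
      · rw [mass_congr (B' := B) (fun s => by simp), div_self (ne_of_gt ‹_›)]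
      · rfl
    rw [this]
    split <;> simp
  · have h0 : cp w (fun _ : Ω => a₀ = a) B = 0 := by
      apply cp_eq_zero hw
      rw [mass_congr (B' := fun _ => False) (fun s => by simp [Ne.symm ha])]
      unfold mass; simp
    rw [h0, negMulLog_zero]

lemma ceg_const {α γ : Type*} [Fintype α] [Fintype γ] (hw : ∀ s, 0 ≤ w s) (f : Ω → α) (c₀ : γ)
    (B : Ω → Prop) (hB : 0 < mass w B) :
    ceg w f (fun _ : Ω => c₀) B = ce w f B := by
  classical
  unfold ceg
  rw [Finset.sum_eq_single c₀]
  · have h1 : cp w (fun _ : Ω => c₀ = c₀) B = 1 := by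
      unfold cp
      rw [if_pos hB, mass_congr (B' := B) (fun s => by simp), div_self (ne_of_gt hB)]
    rw [h1, one_mul]
    exact ce_congr f (fun s => by simp)
  · intro c _ hc
    have h0 : cp w (fun _ : Ω => c₀ = c) B = 0 := by
      apply cp_eq_zero hw
      rw [mass_congr (B' := fun _ => False) (fun s => by simp [hc, Ne.symm hc])]
      unfold mass; simp
    rw [h0, zero_mul]
  · intro h
    exact absurd (Finset.mem_univ c₀) h

lemma ceg_comp_le {α β γ : Type*} [Fintype α] [Fintype β] [Fintype γ] (hw : ∀ s, 0 ≤ w s)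
    (f : Ω → α) (g : Ω → β) (h : β → γ) (B : Ω → Prop) :
    ceg w f g B ≤ ceg w f (fun s => h (g s)) B := by
  classical
  unfold ceg
  rw [← Finset.sum_fiberwise_of_maps_to (fun c (_ : c ∈ Finset.univ) => Finset.mem_univ (h c))
    (fun c => cp w (fun s => g s = c) B * ce w f (fun s => g s = c ∧ B s))]
  refine Finset.sum_le_sum fun c' _ => ?_
  -- abbreviations
  set t := Finset.univ.filter (fun c => h c = c') with ht
  by_cases hB : 0 < mass w B
  swap
  · have hz : ∀ c : β, cp w (fun s => g s = c) B = 0 := fun c => by unfold cp; rw [if_neg hB]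
    have hz' : cp w (fun s => h (g s) = c') B = 0 := by unfold cp; rw [if_neg hB]
    rw [hz']
    rw [Finset.sum_congr rfl (fun c _ => by rw [hz c, zero_mul])]
    simp
  have hM : mass w (fun s => h (g s) = c' ∧ B s)
      = ∑ c ∈ t, mass w (fun s => g s = c ∧ B s) := (mass_fiber g h c' B).symm
  by_cases hM' : 0 < mass w (fun s => h (g s) = c' ∧ B s)
  swap
  · have hMz : mass w (fun s => h (g s) = c' ∧ B s) = 0 :=
      le_antisymm (not_lt.1 hM') (mass_nonneg hw _)
    have hcz : ∀ c ∈ t, mass w (fun s => g s = c ∧ B s) = 0 := by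
      intro c hc
      refine le_antisymm ?_ (mass_nonneg hw _)
      calc mass w (fun s => g s = c ∧ B s)
          ≤ mass w (fun s => h (g s) = c' ∧ B s) := by
            refine mass_mono hw fun s hs => ⟨?_, hs.2⟩
            rw [hs.1]
            exact (Finset.mem_filter.1 hc).2
        _ = 0 := hMz
    have : ∀ c ∈ t, cp w (fun s => g s = c) B * ce w f (fun s => g s = c ∧ B s) = 0 := by
      intro c hc
      rw [cp_eq_zero hw (hcz c hc), zero_mul]
    rw [Finset.sum_congr rfl this]
    simp only [Finset.sum_const_zero]
    have h1 : cp w (fun s => h (g s) = c') B = 0 := cp_eq_zero hw hMz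
    rw [h1, zero_mul]
  -- main case : both masses positive
  set M : ℝ := mass w (fun s => h (g s) = c' ∧ B s) with hMdef
  have hMne : M ≠ 0 := ne_of_gt hM'
  have hBne : mass w B ≠ 0 := ne_of_gt hB
  -- expand ce and swap sums
  unfold ce
  simp only [Finset.mul_sum]
  rw [Finset.sum_comm]
  refine Finset.sum_le_sum fun a _ => ?_
  -- per-a Jensen step
  have hNa : mass w (fun s => f s = a ∧ (h (g s) = c' ∧ B s))
      = ∑ c ∈ t, mass w (fun s => f s = a ∧ (g s = c ∧ B s)) := by
    rw [Finset.sum_congr rfl (fun c _ =>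
      mass_congr (B' := fun s => g s = c ∧ (f s = a ∧ B s)) (fun s => by tauto)),
      mass_fiber g h c' (fun s => f s = a ∧ B s)]
    exact (mass_congr (fun s => by tauto)).symm
  have hjensen : ∑ c ∈ t, (mass w (fun s => g s = c ∧ B s) / M) •
        negMulLog (cp w (fun s => f s = a) (fun s => g s = c ∧ B s))
      ≤ negMulLog (∑ c ∈ t, (mass w (fun s => g s = c ∧ B s) / M) •
          cp w (fun s => f s = a) (fun s => g s = c ∧ B s)) := by
    refine Real.concaveOn_negMulLog.le_map_sum
      (fun c _ => div_nonneg (mass_nonneg hw _) (le_of_lt hM')) ?_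
      (fun c _ => Set.mem_Ici.2 (cp_nonneg hw))
    rw [← Finset.sum_div, ← hM, div_self hMne]
  have hcomb : ∑ c ∈ t, (mass w (fun s => g s = c ∧ B s) / M) •
        cp w (fun s => f s = a) (fun s => g s = c ∧ B s)
      = cp w (fun s => f s = a) (fun s => h (g s) = c' ∧ B s) := by
    have hterm : ∀ c ∈ t, (mass w (fun s => g s = c ∧ B s) / M) •
          cp w (fun s => f s = a) (fun s => g s = c ∧ B s)
        = mass w (fun s => f s = a ∧ (g s = c ∧ B s)) / M := by
      intro c _
      by_cases hc : 0 < mass w (fun s => g s = c ∧ B s)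
      · unfold cp
        rw [if_pos hc]
        rw [smul_eq_mul]
        field_simp
      · have h1 : mass w (fun s => g s = c ∧ B s) = 0 :=
          le_antisymm (not_lt.1 hc) (mass_nonneg hw _)
        have h2 : mass w (fun s => f s = a ∧ (g s = c ∧ B s)) = 0 := by
          refine le_antisymm ?_ (mass_nonneg hw _)
          exact le_trans (mass_mono hw fun s hs => hs.2) (le_of_eq h1)
        simp [h1, h2]
    rw [Finset.sum_congr rfl hterm, ← Finset.sum_div, ← hNa]
    unfold cp
    rw [if_pos hM']
  calc ∑ c ∈ t, cp w (fun s => g s = c) B *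
          negMulLog (cp w (fun s => f s = a) (fun s => g s = c ∧ B s))
      = (M / mass w B) * ∑ c ∈ t, (mass w (fun s => g s = c ∧ B s) / M) •
          negMulLog (cp w (fun s => f s = a) (fun s => g s = c ∧ B s)) := by
        rw [Finset.mul_sum]
        refine Finset.sum_congr rfl fun c _ => ?_
        unfold cp
        rw [if_pos hB, smul_eq_mul]
        field_simp
    _ ≤ (M / mass w B) * negMulLog (cp w (fun s => f s = a) (fun s => h (g s) = c' ∧ B s)) := by
        refine mul_le_mul_of_nonneg_left ?_ (div_nonneg (le_of_lt hM') (le_of_lt hB))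
        rw [← hcomb]
        exact hjensen
    _ = cp w (fun s => h (g s) = c') B *
          negMulLog (cp w (fun s => f s = a) (fun s => h (g s) = c' ∧ B s)) := by
        unfold cp
        rw [if_pos hB]


section Tree

variable {J n : ℕ} [NeZero J] [NeZero n]

/-- The tail variable: coordinates with index `≥ k`, others padded by `0`. -/
noncomputable def Tv (J n : ℕ) [NeZero J] (k : ℕ) (s : Fin n → Fin J) : Fin n → Fin J :=
  fun v => if k ≤ (v : ℕ) then s v else 0

lemma Tv_top {k : ℕ} (hk : n ≤ k) : Tv J n k = fun _ => (fun _ => (0 : Fin J)) :=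
  funext fun s => funext fun v => if_neg (by have := v.isLt; omega)

lemma Tv_step {k : ℕ} (hk : k < n) (s : Fin n → Fin J) :
    Tv J n k s = (fun p : Fin J × (Fin n → Fin J) =>
      fun v : Fin n => if v = ⟨k, hk⟩ then p.1 else p.2 v) (s ⟨k, hk⟩, Tv J n (k + 1) s) := by
  funext v
  by_cases hv : v = ⟨k, hk⟩
  · subst hv
    simp [Tv]
  · have hvk : (v : ℕ) ≠ k := fun hh => hv (Fin.ext hh)
    simp only [Tv, if_neg hv]
    by_cases h2 : k ≤ (v : ℕ)
    · rw [if_pos h2, if_pos (by omega)]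
    · rw [if_neg h2, if_neg (by omega)]

lemma Tv_pair {k : ℕ} (hk : k < n) (s : Fin n → Fin J) :
    (fun t : Fin n → Fin J => (t ⟨k, hk⟩, fun v : Fin n => if v = ⟨k, hk⟩ then 0 else t v))
        (Tv J n k s)
      = (s ⟨k, hk⟩, Tv J n (k + 1) s) := by
  refine Prod.ext ?_ ?_
  · show Tv J n k s ⟨k, hk⟩ = s ⟨k, hk⟩
    simp [Tv]
  · show (fun v : Fin n => if v = ⟨k, hk⟩ then 0 else Tv J n k s v) = Tv J n (k + 1) s
    funext v
    by_cases hv : v = ⟨k, hk⟩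
    · subst hv
      simp [Tv]
    · have hvk : (v : ℕ) ≠ k := fun hh => hv (Fin.ext hh)
      simp only [if_neg hv, Tv]
      by_cases h2 : k ≤ (v : ℕ)
      · rw [if_pos h2, if_pos (by omega)]
      · rw [if_neg h2, if_neg (by omega)]

lemma ce_T (w : (Fin n → Fin J) → ℝ) (hw : ∀ s, 0 ≤ w s) (B : (Fin n → Fin J) → Prop) :
    ∀ m k, n ≤ k + m →
      ce w (Tv J n k) B
        = ∑ u ∈ Finset.univ.filter (fun u : Fin n => k ≤ (u : ℕ)),
            ceg w (fun s => s u) (Tv J n ((u : ℕ) + 1)) B := by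
  intro m
  induction m with
  | zero =>
    intro k hk
    have hk' : n ≤ k := by omega
    rw [Tv_top hk', ce_const hw]
    have : Finset.univ.filter (fun u : Fin n => k ≤ (u : ℕ)) = ∅ := by
      refine Finset.filter_eq_empty_iff.2 fun u _ => ?_
      have := u.isLt
      omega
    rw [this, Finset.sum_empty]
  | succ m ih =>
    intro k hk
    by_cases hkn : n ≤ k
    · rw [Tv_top hkn, ce_const hw]
      have : Finset.univ.filter (fun u : Fin n => k ≤ (u : ℕ)) = ∅ := by
        refine Finset.filter_eq_empty_iff.2 fun u _ => ?_
        have := u.isLt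
        omega
      rw [this, Finset.sum_empty]
    · have hklt : k < n := by omega
      have hE : Tv J n k = fun s => (fun p : Fin J × (Fin n → Fin J) =>
          fun v : Fin n => if v = ⟨k, hklt⟩ then p.1 else p.2 v)
            ((fun s' : Fin n → Fin J => (s' ⟨k, hklt⟩, Tv J n (k + 1) s')) s) :=
        funext (Tv_step hklt)
      rw [hE, ce_comp hw (fun s : Fin n → Fin J => (s ⟨k, hklt⟩, Tv J n (k + 1) s))
        (fun p : Fin J × (Fin n → Fin J) =>
          fun v : Fin n => if v = ⟨k, hklt⟩ then p.1 else p.2 v)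
        (fun t : Fin n → Fin J =>
          (t ⟨k, hklt⟩, fun v : Fin n => if v = ⟨k, hklt⟩ then 0 else t v))
        (fun s => by have hp := Tv_pair hklt s; rw [Tv_step hklt s] at hp; exact hp),
        chain hw (fun s : Fin n → Fin J => s ⟨k, hklt⟩) (Tv J n (k + 1)) B,
        ih (k + 1) (by omega)]
      have hins : Finset.univ.filter (fun u : Fin n => k ≤ (u : ℕ))
          = insert (⟨k, hklt⟩ : Fin n)
              (Finset.univ.filter (fun u : Fin n => k + 1 ≤ (u : ℕ))) := by
        ext u
        simp only [Finset.mem_filter, Finset.mem_univ, true_and, Finset.mem_insert, Fin.ext_iff]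
        omega
      rw [hins, Finset.sum_insert (by simp)]
      ring

end Tree

end HMTAux

namespace HMTBridge
open HMTAux HMTModel

variable {J V n : ℕ} [NeZero J] [NeZero n] (M : HMTModel J V n) (x : Fin n → Fin V)

noncomputable def wt : (Fin n → Fin J) → ℝ := fun s => M.joint s x

lemma wt_nonneg : ∀ s, 0 ≤ wt M x s := by
  intro s
  unfold wt HMTModel.joint
  exact mul_nonneg (mul_nonneg (M.init_nonneg _)
    (Finset.prod_nonneg fun u _ => M.trans_nonneg _ _))
    (Finset.prod_nonneg fun u _ => M.emit_nonneg _ _)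

lemma pr_congr {E E' : (Fin n → Fin J) → (Fin n → Fin V) → Prop}
    (h : ∀ s y, E s y ↔ E' s y) : M.pr E = M.pr E' := by
  classical
  unfold HMTModel.pr
  refine Finset.sum_congr rfl fun s _ => Finset.sum_congr rfl fun y _ => ?_
  exact if_congr (h s y) rfl rfl

lemma pr_eq_mass (Q : (Fin n → Fin J) → Prop) :
    M.pr (fun s y => Q s ∧ y = x) = mass (wt M x) Q := by
  classical
  unfold HMTModel.pr mass
  refine Finset.sum_congr rfl fun s _ => ?_
  by_cases hq : Q s
  · simp [hq, Finset.sum_ite_eq', wt]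
  · simp [hq]

lemma pr_obs : M.pr (obsEq x) = mass (wt M x) (fun _ => True) := by
  rw [← pr_eq_mass M x]
  exact pr_congr M (fun s y => by simp [HMTModel.obsEq])

lemma cpr_obs {α : Type*} (f : (Fin n → Fin J) → α) (a : α) :
    M.cpr (fun s _ => f s = a) (obsEq x)
      = cp (wt M x) (fun s => f s = a) (fun _ => True) := by
  unfold HMTModel.cpr cp
  have h1 : M.pr (fun s y => (f s = a) ∧ obsEq x s y)
      = mass (wt M x) (fun s => f s = a ∧ True) := by
    rw [pr_congr M (E' := fun s y => (f s = a) ∧ y = x) (fun s y => by simp [HMTModel.obsEq]),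
      pr_eq_mass M x (fun s => f s = a)]
    exact mass_congr (fun s => by simp)
  rw [pr_obs M x, h1]

lemma condEnt_obs {α : Type*} [Fintype α] (f : (Fin n → Fin J) → α) :
    M.condEnt f (obsEq x) = ce (wt M x) f (fun _ => True) := by
  unfold HMTModel.condEnt ce
  rw [← Finset.sum_neg_distrib]
  refine Finset.sum_congr rfl fun a _ => ?_
  rw [cpr_obs M x f a, Real.negMulLog, neg_mul]

lemma cpr_inner {α β : Type*} (f : (Fin n → Fin J) → α) (g : (Fin n → Fin J) → β)
    (a : α) (c : β) :
    M.cpr (fun s _ => f s = a) (fun s y => g s = c ∧ obsEq x s y)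
      = cp (wt M x) (fun s => f s = a) (fun s => g s = c ∧ True) := by
  unfold HMTModel.cpr cp
  have h0 : M.pr (fun s y => g s = c ∧ obsEq x s y)
      = mass (wt M x) (fun s => g s = c ∧ True) := by
    rw [pr_congr M (E' := fun s y => (g s = c) ∧ y = x) (fun s y => by simp [HMTModel.obsEq]),
      pr_eq_mass M x (fun s => g s = c)]
    exact mass_congr (fun s => by simp)
  have h1 : M.pr (fun s y => (f s = a) ∧ (g s = c ∧ obsEq x s y))
      = mass (wt M x) (fun s => f s = a ∧ (g s = c ∧ True)) := by
    rw [pr_congr M (E' := fun s y => (f s = a ∧ g s = c) ∧ y = x)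
        (fun s y => by simp [HMTModel.obsEq]; tauto),
      pr_eq_mass M x (fun s => f s = a ∧ g s = c)]
    exact mass_congr (fun s => by tauto)
  rw [h0, h1]

lemma condEntGiven_obs {α β : Type*} [Fintype α] [Fintype β]
    (f : (Fin n → Fin J) → α) (g : (Fin n → Fin J) → β) :
    M.condEntGiven f g (obsEq x) = ceg (wt M x) f g (fun _ => True) := by
  unfold HMTModel.condEntGiven ceg
  refine Finset.sum_congr rfl fun c _ => ?_
  rw [cpr_obs M x g c]
  congr 1
  unfold HMTModel.condEnt ce
  rw [← Finset.sum_neg_distrib]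
  refine Finset.sum_congr rfl fun a _ => ?_
  rw [cpr_inner M x f g a c, Real.negMulLog, neg_mul]

end HMTBridge

/-- In a hidden Markov tree model, the global conditional entropy
of the state tree given the observations is bounded above by the sum over all
vertices of the entropies of each state conditioned on its children states:
`H(S | X = x) ≤ ∑_{u∈U} H(S_u | S_{c(u)}, X = x)`, where the term for a leaf
vertex `u` is `H(S_u | X = x)`. -/
theorem hmt_entropy_children_upper_bound
    {J V n : ℕ} [NeZero J] [NeZero n] (M : HMTModel J V n)
    (x : Fin n → Fin V) (hx : 0 < M.pr (obsEq x)) :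
    M.condEnt (fun s => s) (obsEq x)
      ≤ ∑ u : Fin n,
          if Finset.univ.filter (fun v : Fin n => v ≠ 0 ∧ M.parent v = u) = ∅
          then M.condEnt (fun s => s u) (obsEq x)
          else M.condEntGiven (fun s => s u) (M.childVar u) (obsEq x) := by
  classical
  have hw := HMTBridge.wt_nonneg M x
  have hZ : 0 < HMTAux.mass (HMTBridge.wt M x) (fun _ => True) := by
    rw [← HMTBridge.pr_obs M x]
    exact hx
  have hL : M.condEnt (fun s => s) (obsEq x)
      = HMTAux.ce (HMTBridge.wt M x) (HMTAux.Tv J n 0) (fun _ => True) := by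
    rw [HMTBridge.condEnt_obs M x (fun s => s)]
    have hT : HMTAux.Tv J n 0 = fun s : Fin n → Fin J => s :=
      funext fun s => funext fun v => if_pos (Nat.zero_le _)
    rw [hT]
  rw [hL, HMTAux.ce_T (HMTBridge.wt M x) hw _ n 0 (by omega)]
  have huniv : Finset.univ.filter (fun u : Fin n => 0 ≤ (u : ℕ)) = Finset.univ := by simp
  rw [huniv]
  refine Finset.sum_le_sum fun u _ => ?_
  by_cases hleaf : Finset.univ.filter (fun v : Fin n => v ≠ 0 ∧ M.parent v = u) = ∅
  · rw [if_pos hleaf, HMTBridge.condEnt_obs M x (fun s => s u)]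
    calc HMTAux.ceg (HMTBridge.wt M x) (fun s => s u) (HMTAux.Tv J n ((u : ℕ) + 1))
          (fun _ => True)
        ≤ HMTAux.ceg (HMTBridge.wt M x) (fun s => s u)
            (fun s => (fun _ : Fin n → Fin J => ()) (HMTAux.Tv J n ((u : ℕ) + 1) s))
            (fun _ => True) :=
          HMTAux.ceg_comp_le hw (fun s => s u) (HMTAux.Tv J n ((u : ℕ) + 1))
            (fun _ : Fin n → Fin J => ()) (fun _ => True)
      _ = HMTAux.ce (HMTBridge.wt M x) (fun s => s u) (fun _ => True) :=
          HMTAux.ceg_const hw (fun s => s u) () (fun _ => True) hZ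
  · rw [if_neg hleaf, HMTBridge.condEntGiven_obs M x (fun s => s u) (M.childVar u)]
    have hcomp : (fun s => (fun t : Fin n → Fin J =>
          (fun v : Fin n => if v ≠ 0 ∧ M.parent v = u then t v else 0))
            (HMTAux.Tv J n ((u : ℕ) + 1) s))
        = M.childVar u := by
      funext s v
      show (if v ≠ 0 ∧ M.parent v = u then HMTAux.Tv J n ((u : ℕ) + 1) s v else 0)
        = M.childVar u s v
      unfold HMTModel.childVar
      by_cases hv : v ≠ 0 ∧ M.parent v = u
      · rw [if_pos hv, if_pos hv]
        unfold HMTAux.Tv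
        have hlt : M.parent v < v := M.parent_lt v hv.1
        rw [hv.2] at hlt
        rw [if_pos (by exact Nat.succ_le_of_lt hlt)]
      · rw [if_neg hv, if_neg hv]
    calc HMTAux.ceg (HMTBridge.wt M x) (fun s => s u) (HMTAux.Tv J n ((u : ℕ) + 1))
          (fun _ => True)
        ≤ HMTAux.ceg (HMTBridge.wt M x) (fun s => s u)
            (fun s => (fun t : Fin n → Fin J =>
              (fun v : Fin n => if v ≠ 0 ∧ M.parent v = u then t v else 0))
                (HMTAux.Tv J n ((u : ℕ) + 1) s)) (fun _ => True) :=
          HMTAux.ceg_comp_le hw (fun s => s u) (HMTAux.Tv J n ((u : ℕ) + 1))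
            (fun t : Fin n → Fin J =>
              (fun v : Fin n => if v ≠ 0 ∧ M.parent v = u then t v else 0)) (fun _ => True)
      _ = HMTAux.ceg (HMTBridge.wt M x) (fun s => s u) (M.childVar u) (fun _ => True) := by
          rw [hcomp]
end

section
/- In a hidden Markov chain model, the conditional entropy of the state sequence given the observed sequence decomposes additively as a sum of entropies conditioned on the future state: H(S | X = x) = Σ_{t=0}^{T−2} H(S_t | S_{t+1}, X = x) + H(S_{T−1} | X = x). -/
/-- A hidden Markov chain (HMC) model with `J` states, observation alphabet
`{0, …, V-1}` and sequence length `T`: initial probabilities, transition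
probabilities and emission probabilities. -/
structure HMCModel (J V T : ℕ) where
  init : Fin J → ℝ
  trans : Fin J → Fin J → ℝ
  emit : Fin J → Fin V → ℝ
  init_nonneg : ∀ j, 0 ≤ init j
  init_sum : ∑ j, init j = 1
  trans_nonneg : ∀ i j, 0 ≤ trans i j
  trans_sum : ∀ i, ∑ j, trans i j = 1
  emit_nonneg : ∀ j y, 0 ≤ emit j y
  emit_sum : ∀ j, ∑ y, emit j y = 1

namespace HMCModel

variable {J V T : ℕ} [NeZero J] [NeZero T]

/-- The joint law of the state sequence and the observed sequence:
`P(S = s, X = x) = π_{s_0} b_{s_0}(x_0) ∏_{t=1}^{T-1} p_{s_{t-1} s_t} b_{s_t}(x_t)`. -/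
noncomputable def joint (M : HMCModel J V T) (s : Fin T → Fin J) (x : Fin T → Fin V) : ℝ :=
  M.init (s 0) * M.emit (s 0) (x 0) *
    ∏ t ∈ Finset.univ.filter (fun t : Fin T => t ≠ 0),
      M.trans (s (t - 1)) (s t) * M.emit (s t) (x t)

open Classical in
/-- Probability of an event on (state sequence, observed sequence). -/
noncomputable def pr (M : HMCModel J V T)
    (E : (Fin T → Fin J) → (Fin T → Fin V) → Prop) : ℝ :=
  ∑ s : Fin T → Fin J, ∑ y : Fin T → Fin V, if E s y then M.joint s y else 0

/-- Conditional probability `P(A | B)`; it is `0` when the conditioning event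
has probability zero. -/
noncomputable def cpr (M : HMCModel J V T)
    (A B : (Fin T → Fin J) → (Fin T → Fin V) → Prop) : ℝ :=
  if 0 < M.pr B then M.pr (fun s y => A s y ∧ B s y) / M.pr B else 0

/-- Entropy of the random vector `f(S)` given the event `E`
(natural logarithm, with the convention `0 log 0 = 0`). -/
noncomputable def condEnt (M : HMCModel J V T) {α : Type*} [Fintype α]
    (f : (Fin T → Fin J) → α)
    (E : (Fin T → Fin J) → (Fin T → Fin V) → Prop) : ℝ :=
  -∑ a : α, M.cpr (fun s _ => f s = a) E * Real.log (M.cpr (fun s _ => f s = a) E)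

/-- Entropy of `f(S)` given the random vector `g(S)` and the event `E`:
`H(f(S) | g(S), E) = ∑_c P(g(S) = c | E) H(f(S) | g(S) = c, E)`. -/
noncomputable def condEntGiven (M : HMCModel J V T) {α β : Type*} [Fintype α] [Fintype β]
    (f : (Fin T → Fin J) → α) (g : (Fin T → Fin J) → β)
    (E : (Fin T → Fin J) → (Fin T → Fin V) → Prop) : ℝ :=
  ∑ c : β, M.cpr (fun s _ => g s = c) E * M.condEnt f (fun s y => g s = c ∧ E s y)

/-- The event `X = x`. -/
def obsEq (x : Fin T → Fin V) : (Fin T → Fin J) → (Fin T → Fin V) → Prop :=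
  fun _ y => y = x

/-- The partial state vector `S_0^{t-1}` (coordinates `≥ t` are padded by `0`). -/
def prefixVar (t : ℕ) (s : Fin T → Fin J) : Fin T → Fin J :=
  fun r => if (r : ℕ) < t then s r else 0

/-- The partial state vector `S_t^{T-1}` (coordinates `< t` are padded by `0`). -/
def suffixVar (t : ℕ) (s : Fin T → Fin J) : Fin T → Fin J :=
  fun r => if t ≤ (r : ℕ) then s r else 0

end HMCModel

open HMCModel


namespace HMCAux
open Finset
set_option linter.unusedSectionVars false

variable {J : ℕ} [NeZero J]

noncomputable def cw (v : Fin J → ℝ) (A : ℕ → Fin J → Fin J → ℝ) (n : ℕ)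
    (s : Fin (n+1) → Fin J) : ℝ :=
  v (s 0) * ∏ t : Fin n, A t (s t.castSucc) (s t.succ)

noncomputable def ac (v : Fin J → ℝ) (A : ℕ → Fin J → Fin J → ℝ) : ℕ → Fin J → ℝ
  | 0 => v
  | n+1 => fun j => ∑ i, ac v A n i * A n i j

noncomputable def bf (A : ℕ → Fin J → Fin J → ℝ) (f : Fin J → ℝ) : ℕ → ℕ → Fin J → ℝ
  | 0, _ => f
  | d+1, t => fun j => ∑ k, A t j k * bf A f d (t+1) k

lemma bf_shift (A : ℕ → Fin J → Fin J → ℝ) (f : Fin J → ℝ) (d t : ℕ) :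
    bf A f (d+1) t = bf A (fun i => ∑ a, A (t+d) i a * f a) d t := by
  induction d generalizing t with
  | zero => simp [bf]
  | succ d ih =>
    funext j
    show (∑ k, A t j k * bf A f (d+1) (t+1) k) = ∑ k, A t j k * bf A _ d (t+1) k
    rw [ih (t+1)]
    have h : t + 1 + d = t + (d+1) := by omega
    rw [h]

lemma cw_snoc (v : Fin J → ℝ) (A : ℕ → Fin J → Fin J → ℝ) (n : ℕ)
    (s : Fin (n+1) → Fin J) (a : Fin J) :
    cw v A (n+1) (Fin.snoc s a) = cw v A n s * A n (s (Fin.last n)) a := by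
  unfold cw
  rw [Fin.prod_univ_castSucc]
  have h0 : (Fin.snoc s a : Fin (n+2) → Fin J) 0 = s 0 := by
    have : ((0 : Fin (n+1)).castSucc) = (0 : Fin (n+2)) := by ext; simp
    rw [← this, Fin.snoc_castSucc]
  rw [h0]
  have hlast : (Fin.last n).succ = Fin.last (n+1) := by ext; simp
  have hterm : ∀ t : Fin n,
      A (t.castSucc : Fin (n+1)) ((Fin.snoc s a : Fin (n+2) → Fin J) (t.castSucc.castSucc))
          ((Fin.snoc s a : Fin (n+2) → Fin J) (t.castSucc.succ))
        = A t (s t.castSucc) (s t.succ) := by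
    intro t
    rw [Fin.succ_castSucc, Fin.snoc_castSucc, Fin.snoc_castSucc]
    rfl
  rw [Finset.prod_congr rfl (fun t _ => hterm t)]
  rw [hlast, Fin.snoc_last, Fin.snoc_castSucc]
  simp [mul_assoc]

lemma sum_fun_snoc {M : Type*} [AddCommMonoid M] (n : ℕ) (F : (Fin (n+2) → Fin J) → M) :
    ∑ s : Fin (n+2) → Fin J, F s = ∑ s : Fin (n+1) → Fin J, ∑ a : Fin J, F (Fin.snoc s a) := by
  rw [← (Fin.snocEquiv (fun _ => Fin J)).sum_comp]
  rw [Fintype.sum_prod_type]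
  rw [Finset.sum_comm]
  simp [Fin.snocEquiv]

lemma fact_gen (v : Fin J → ℝ) (A : ℕ → Fin J → Fin J → ℝ) :
    ∀ (n : ℕ) (f : Fin J → ℝ) (t : ℕ) (ht : t ≤ n) (j : Fin J),
      (∑ s : Fin (n+1) → Fin J,
        if s ⟨t, Nat.lt_succ_of_le ht⟩ = j then cw v A n s * f (s (Fin.last n)) else 0)
      = ac v A t j * bf A f (n - t) t j := by
  intro n
  induction n with
  | zero =>
    intro f t ht j
    have ht0 : t = 0 := Nat.le_zero.mp ht
    subst ht0
    rw [← (Equiv.funUnique (Fin 1) (Fin J)).symm.sum_comp]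
    simp [cw, ac, bf, Equiv.funUnique]
  | succ n IH =>
    have hZ : ∀ g : Fin J → ℝ,
        (∑ s : Fin (n+1) → Fin J, cw v A n s * g (s (Fin.last n))) = ∑ i, ac v A n i * g i := by
      intro g
      have h1 : ∀ s : Fin (n+1) → Fin J,
          cw v A n s * g (s (Fin.last n))
            = ∑ j : Fin J, if s (Fin.last n) = j then cw v A n s * g (s (Fin.last n)) else 0 := by
        intro s
        rw [Finset.sum_ite_eq]
        simp
      rw [Finset.sum_congr rfl (fun s _ => h1 s), Finset.sum_comm]
      refine Finset.sum_congr rfl fun i _ => ?_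
      have h2 : ∀ s : Fin (n+1) → Fin J,
          (if s (Fin.last n) = i then cw v A n s * g (s (Fin.last n)) else 0)
            = (if s ⟨n, Nat.lt_succ_of_le le_rfl⟩ = i then cw v A n s * g (s (Fin.last n)) else 0) := by
        intro s; rfl
      rw [Finset.sum_congr rfl (fun s _ => h2 s), IH g n le_rfl i]
      simp [bf]
    intro f t ht j
    rw [sum_fun_snoc]
    have hsnocval : ∀ (s : Fin (n+1) → Fin J) (a : Fin J),
        cw v A (n+1) (Fin.snoc s a) * f ((Fin.snoc s a : Fin (n+2) → Fin J) (Fin.last (n+1)))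
          = cw v A n s * A n (s (Fin.last n)) a * f a := by
      intro s a; rw [cw_snoc, Fin.snoc_last]
    rcases Nat.lt_or_ge t (n+1) with htn | htn
    · -- t ≤ n : index is castSucc
      have htn' : t ≤ n := Nat.lt_succ_iff.mp htn
      have hidx : ∀ (s : Fin (n+1) → Fin J) (a : Fin J),
          (Fin.snoc s a : Fin (n+2) → Fin J) ⟨t, Nat.lt_succ_of_le ht⟩
            = s ⟨t, Nat.lt_succ_of_le htn'⟩ := by
        intro s a
        have : (⟨t, Nat.lt_succ_of_le ht⟩ : Fin (n+2))
            = (⟨t, Nat.lt_succ_of_le htn'⟩ : Fin (n+1)).castSucc := rfl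
        rw [this, Fin.snoc_castSucc]
      have hstep : ∀ s : Fin (n+1) → Fin J,
          (∑ a : Fin J, if (Fin.snoc s a : Fin (n+2) → Fin J) ⟨t, Nat.lt_succ_of_le ht⟩ = j then
              cw v A (n+1) (Fin.snoc s a) * f ((Fin.snoc s a : Fin (n+2) → Fin J) (Fin.last (n+1))) else 0)
            = (if s ⟨t, Nat.lt_succ_of_le htn'⟩ = j then
                cw v A n s * ((fun i => ∑ a, A n i a * f a) (s (Fin.last n))) else 0) := by
        intro s
        by_cases hc : s ⟨t, Nat.lt_succ_of_le htn'⟩ = j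
        · simp only [hidx, hc, if_true]
          rw [Finset.mul_sum]
          refine Finset.sum_congr rfl fun a _ => ?_
          rw [hsnocval]
          ring
        · simp only [hidx, hc, if_false]
          simp
      rw [Finset.sum_congr rfl (fun s _ => hstep s)]
      rw [IH (fun i => ∑ a, A n i a * f a) t htn' j]
      have h1 : n + 1 - t = (n - t) + 1 := by omega
      rw [h1, bf_shift]
      have h2 : t + (n - t) = n := by omega
      rw [h2]
    · -- index is last
      have ht1 : t = n + 1 := le_antisymm ht htn
      subst ht1
      have hidx : ∀ (s : Fin (n+1) → Fin J) (a : Fin J),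
          (Fin.snoc s a : Fin (n+2) → Fin J) ⟨n+1, Nat.lt_succ_of_le ht⟩ = a := by
        intro s a
        have : (⟨n+1, Nat.lt_succ_of_le ht⟩ : Fin (n+2)) = Fin.last (n+1) := rfl
        rw [this, Fin.snoc_last]
      have hstep : ∀ s : Fin (n+1) → Fin J,
          (∑ a : Fin J, if (Fin.snoc s a : Fin (n+2) → Fin J) ⟨n+1, Nat.lt_succ_of_le ht⟩ = j then
              cw v A (n+1) (Fin.snoc s a) * f ((Fin.snoc s a : Fin (n+2) → Fin J) (Fin.last (n+1))) else 0)
            = cw v A n s * (A n (s (Fin.last n)) j * f j) := by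
        intro s
        simp only [hidx]
        rw [Finset.sum_congr rfl (fun a _ => by rw [hsnocval s a])]
        rw [Finset.sum_ite_eq' Finset.univ j (fun a => cw v A n s * A n (s (Fin.last n)) a * f a)]
        simp [mul_assoc]
      rw [Finset.sum_congr rfl (fun s _ => hstep s)]
      rw [hZ (fun i => A n i j * f j)]
      show _ = ac v A (n+1) j * bf A f (n + 1 - (n+1)) (n+1) j
      have : n + 1 - (n + 1) = 0 := by omega
      rw [this]
      show _ = (∑ i, ac v A n i * A n i j) * f j
      rw [Finset.sum_mul]
      refine Finset.sum_congr rfl fun i _ => by ring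

lemma fact_z (v : Fin J → ℝ) (A : ℕ → Fin J → Fin J → ℝ) (n : ℕ) (f : Fin J → ℝ) :
    (∑ s : Fin (n+1) → Fin J, cw v A n s * f (s (Fin.last n))) = ∑ i, ac v A n i * f i := by
  have h1 : ∀ s : Fin (n+1) → Fin J,
      cw v A n s * f (s (Fin.last n))
        = ∑ j : Fin J, if s (Fin.last n) = j then cw v A n s * f (s (Fin.last n)) else 0 := by
    intro s
    rw [Finset.sum_ite_eq]
    simp
  rw [Finset.sum_congr rfl (fun s _ => h1 s), Finset.sum_comm]
  refine Finset.sum_congr rfl fun i _ => ?_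
  have h2 : ∀ s : Fin (n+1) → Fin J,
      (if s (Fin.last n) = i then cw v A n s * f (s (Fin.last n)) else 0)
        = (if s ⟨n, Nat.lt_succ_of_le le_rfl⟩ = i then cw v A n s * f (s (Fin.last n)) else 0) := by
    intro s; rfl
  rw [Finset.sum_congr rfl (fun s _ => h2 s), fact_gen v A n f n le_rfl i]
  simp [bf]

lemma fact_pair (v : Fin J → ℝ) (A : ℕ → Fin J → Fin J → ℝ) :
    ∀ (n : ℕ) (f : Fin J → ℝ) (t : ℕ) (ht : t < n) (i j : Fin J),
      (∑ s : Fin (n+1) → Fin J,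
        if s ⟨t, by omega⟩ = i ∧ s ⟨t+1, by omega⟩ = j then cw v A n s * f (s (Fin.last n)) else 0)
      = ac v A t i * A t i j * bf A f (n - (t+1)) (t+1) j := by
  intro n
  induction n with
  | zero => intro f t ht; omega
  | succ n IH =>
    intro f t ht i j
    rw [sum_fun_snoc]
    have hsnocval : ∀ (s : Fin (n+1) → Fin J) (a : Fin J),
        cw v A (n+1) (Fin.snoc s a) * f ((Fin.snoc s a : Fin (n+2) → Fin J) (Fin.last (n+1)))
          = cw v A n s * A n (s (Fin.last n)) a * f a := by
      intro s a; rw [cw_snoc, Fin.snoc_last]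
    rcases Nat.lt_or_ge t n with htn | htn
    · -- t+1 ≤ n : both indices castSucc
      have hidx1 : ∀ (s : Fin (n+1) → Fin J) (a : Fin J),
          (Fin.snoc s a : Fin (n+2) → Fin J) ⟨t, by omega⟩ = s ⟨t, by omega⟩ := by
        intro s a
        have h : (⟨t, by omega⟩ : Fin (n+2)) = (⟨t, by omega⟩ : Fin (n+1)).castSucc := rfl
        rw [h, Fin.snoc_castSucc]
      have hidx2 : ∀ (s : Fin (n+1) → Fin J) (a : Fin J),
          (Fin.snoc s a : Fin (n+2) → Fin J) ⟨t+1, by omega⟩ = s ⟨t+1, by omega⟩ := by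
        intro s a
        have h : (⟨t+1, by omega⟩ : Fin (n+2)) = (⟨t+1, by omega⟩ : Fin (n+1)).castSucc := rfl
        rw [h, Fin.snoc_castSucc]
      have hstep : ∀ s : Fin (n+1) → Fin J,
          (∑ a : Fin J, if (Fin.snoc s a : Fin (n+2) → Fin J) ⟨t, by omega⟩ = i
                ∧ (Fin.snoc s a : Fin (n+2) → Fin J) ⟨t+1, by omega⟩ = j then
              cw v A (n+1) (Fin.snoc s a) * f ((Fin.snoc s a : Fin (n+2) → Fin J) (Fin.last (n+1))) else 0)
            = (if s ⟨t, by omega⟩ = i ∧ s ⟨t+1, by omega⟩ = j then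
                cw v A n s * ((fun b => ∑ a, A n b a * f a) (s (Fin.last n))) else 0) := by
        intro s
        by_cases hc : s ⟨t, by omega⟩ = i ∧ s (⟨t+1, by omega⟩ : Fin (n+1)) = j
        · simp only [hidx1, hidx2, hc, if_true, and_self]
          rw [Finset.mul_sum]
          refine Finset.sum_congr rfl fun a _ => ?_
          rw [hsnocval]
          ring
        · simp only [hidx1, hidx2, hc, if_false]
          simp
      rw [Finset.sum_congr rfl (fun s _ => hstep s)]
      rw [IH (fun b => ∑ a, A n b a * f a) t htn i j]
      have h1 : n + 1 - (t+1) = (n - (t+1)) + 1 := by omega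
      rw [h1, bf_shift]
      have h2 : t + 1 + (n - (t+1)) = n := by omega
      rw [h2]
    · -- t = n
      have ht1 : t = n := by omega
      subst ht1
      have hidx1 : ∀ (s : Fin (t+1) → Fin J) (a : Fin J),
          (Fin.snoc s a : Fin (t+2) → Fin J) ⟨t, by omega⟩ = s (Fin.last t) := by
        intro s a
        have h : (⟨t, by omega⟩ : Fin (t+2)) = (Fin.last t).castSucc := by ext; simp
        rw [h, Fin.snoc_castSucc]
      have hidx2 : ∀ (s : Fin (t+1) → Fin J) (a : Fin J),
          (Fin.snoc s a : Fin (t+2) → Fin J) ⟨t+1, by omega⟩ = a := by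
        intro s a
        have h : (⟨t+1, by omega⟩ : Fin (t+2)) = Fin.last (t+1) := by ext; simp
        rw [h, Fin.snoc_last]
      have hlastidx : (⟨t, by omega⟩ : Fin (t+1)) = Fin.last t := by ext; simp
      have hstep : ∀ s : Fin (t+1) → Fin J,
          (∑ a : Fin J, if (Fin.snoc s a : Fin (t+2) → Fin J) ⟨t, by omega⟩ = i
                ∧ (Fin.snoc s a : Fin (t+2) → Fin J) ⟨t+1, by omega⟩ = j then
              cw v A (t+1) (Fin.snoc s a) * f ((Fin.snoc s a : Fin (t+2) → Fin J) (Fin.last (t+1))) else 0)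
            = (if s ⟨t, by omega⟩ = i then
                cw v A t s * ((fun b => A t b j * f j) (s (Fin.last t))) else 0) := by
        intro s
        rw [Finset.sum_congr rfl (fun a (_ : a ∈ Finset.univ) => by
          rw [hidx1, hidx2, hsnocval s a])]
        by_cases hc : s (Fin.last t) = i
        · rw [hlastidx, if_pos hc]
          rw [Finset.sum_congr rfl (fun a (_ : a ∈ Finset.univ) => by
            rw [show (if s (Fin.last t) = i ∧ a = j then cw v A t s * A t (s (Fin.last t)) a * f a else 0)
              = (if a = j then cw v A t s * A t (s (Fin.last t)) a * f a else 0) from by simp [hc]])]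
          rw [Finset.sum_ite_eq' Finset.univ j (fun a => cw v A t s * A t (s (Fin.last t)) a * f a)]
          simp only [Finset.mem_univ, if_true]
          rw [hc]
          ring
        · rw [hlastidx, if_neg hc]
          refine Finset.sum_eq_zero fun a _ => ?_
          simp [hc]
      rw [Finset.sum_congr rfl (fun s _ => hstep s)]
      rw [fact_gen v A t (fun b => A t b j * f j) t le_rfl i]
      have h0 : t - t = 0 := by omega
      have h1 : t + 1 - (t+1) = 0 := by omega
      rw [h0, h1]
      show ac v A t i * (A t i j * f j) = ac v A t i * A t i j * f j
      ring


theorem iteSwap {α : Sort*} {P Q : Prop} (h1 : Decidable P) (h2 : Decidable Q)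
    {a b a' b' : α} (hpq : P ↔ Q) (ha : a = a') (hb : b = b') :
    @ite α P h1 a b = @ite α Q h2 a' b' := by
  subst ha; subst hb
  cases propext hpq
  cases Subsingleton.elim h1 h2
  rfl

lemma sum_ite_eq_any {β : Type*} [Fintype β] {γ : Type*} [AddCommMonoid γ]
    (a : β) (f : β → γ) (inst : ∀ s : β, Decidable (s = a)) :
    (∑ s : β, @ite γ (s = a) (inst s) (f s) 0) = f a := by
  rw [Finset.sum_eq_single a (fun b _ hb => by rw [if_neg hb])
    (fun h => absurd (Finset.mem_univ a) h)]
  rw [if_pos rfl]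

noncomputable def mgd {n : ℕ} (w : (Fin (n+1) → Fin J) → ℝ) (r : Fin (n+1)) (j : Fin J) : ℝ :=
  ∑ s : Fin (n+1) → Fin J, if s r = j then w s else 0

noncomputable def mg2d {n : ℕ} (w : (Fin (n+1) → Fin J) → ℝ) (t : Fin n) (i j : Fin J) : ℝ :=
  ∑ s : Fin (n+1) → Fin J, if s t.castSucc = i ∧ s t.succ = j then w s else 0

lemma entropy_key {n : ℕ} (w : (Fin (n+1) → Fin J) → ℝ)
    (hw : ∀ s, 0 ≤ w s) (Z : ℝ) (hZ : 0 < Z) (hZsum : Z = ∑ s, w s)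
    (markov : ∀ s : Fin (n+1) → Fin J,
      w s * ∏ t : Fin n, mgd w t.succ (s t.succ)
        = mgd w (Fin.last n) (s (Fin.last n)) * ∏ t : Fin n, mg2d w t (s t.castSucc) (s t.succ)) :
    (-∑ a : Fin (n+1) → Fin J, (w a / Z) * Real.log (w a / Z))
      = (∑ t : Fin n, ∑ c : Fin J,
          (mgd w t.succ c / Z)
            * (-(∑ i : Fin J,
                (if 0 < mgd w t.succ c then mg2d w t i c / mgd w t.succ c else 0)
                * Real.log (if 0 < mgd w t.succ c then mg2d w t i c / mgd w t.succ c else 0))))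
        + (-∑ j : Fin J, (mgd w (Fin.last n) j / Z)
            * Real.log (mgd w (Fin.last n) j / Z)) := by
  classical
  have hmg_nonneg : ∀ (r : Fin (n+1)) j, 0 ≤ mgd w r j := by
    intro r j
    refine Finset.sum_nonneg fun s _ => ?_
    by_cases h : s r = j <;> simp [h, hw s]
  have hmg2_nonneg : ∀ (t : Fin n) i j, 0 ≤ mg2d w t i j := by
    intro t i j
    refine Finset.sum_nonneg fun s _ => ?_
    by_cases h : s t.castSucc = i ∧ s t.succ = j <;> simp [h, hw s]
  have hw_le_mg : ∀ (r : Fin (n+1)) (a : Fin (n+1) → Fin J), w a ≤ mgd w r (a r) := by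
    intro r a
    have := Finset.single_le_sum (f := fun s => if s r = a r then w s else 0)
      (fun s _ => by by_cases h : s r = a r <;> simp [h, hw s]) (Finset.mem_univ a)
    simpa [mgd] using this
  have hw_le_mg2 : ∀ (t : Fin n) (a : Fin (n+1) → Fin J),
      w a ≤ mg2d w t (a t.castSucc) (a t.succ) := by
    intro t a
    have := Finset.single_le_sum
      (f := fun s => if s t.castSucc = a t.castSucc ∧ s t.succ = a t.succ then w s else 0)
      (fun s _ => by by_cases h : s t.castSucc = a t.castSucc ∧ s t.succ = a t.succ <;>
        simp [h, hw s]) (Finset.mem_univ a)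
    simpa [mg2d] using this
  have hmg2_le_mg : ∀ (t : Fin n) i c, mg2d w t i c ≤ mgd w t.succ c := by
    intro t i c
    refine Finset.sum_le_sum fun s _ => ?_
    by_cases h : s t.castSucc = i ∧ s t.succ = c
    · simp [h, h.2]
    · simp only [h, if_false]
      by_cases h2 : s t.succ = c <;> simp [h2, hw s]
  -- step 2 : per-sequence log expansion
  have step2 : ∀ a : Fin (n+1) → Fin J, (w a / Z) * Real.log (w a / Z)
      = (w a / Z) * ((∑ t : Fin n,
          Real.log (mg2d w t (a t.castSucc) (a t.succ) / mgd w t.succ (a t.succ)))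
          + Real.log (mgd w (Fin.last n) (a (Fin.last n)) / Z)) := by
    intro a
    rcases (hw a).eq_or_lt with h0 | hpos
    · rw [← h0]; simp
    · have hmgpos : ∀ t : Fin n, 0 < mgd w t.succ (a t.succ) :=
        fun t => lt_of_lt_of_le hpos (hw_le_mg t.succ a)
      have hmg2pos : ∀ t : Fin n, 0 < mg2d w t (a t.castSucc) (a t.succ) :=
        fun t => lt_of_lt_of_le hpos (hw_le_mg2 t a)
      have hLpos : 0 < mgd w (Fin.last n) (a (Fin.last n)) :=
        lt_of_lt_of_le hpos (hw_le_mg (Fin.last n) a)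
      have hprodpos : 0 < ∏ t : Fin n, mgd w t.succ (a t.succ) :=
        Finset.prod_pos fun t _ => hmgpos t
      have key : w a / Z = (mgd w (Fin.last n) (a (Fin.last n)) / Z)
          * ∏ t : Fin n, (mg2d w t (a t.castSucc) (a t.succ) / mgd w t.succ (a t.succ)) := by
        have hm := markov a
        rw [Finset.prod_div_distrib, div_mul_div_comm]
        rw [div_eq_div_iff hZ.ne' (by exact (mul_pos hZ hprodpos).ne')]
        linear_combination Z * hm
      rw [key]
      congr 1
      rw [Real.log_mul (div_pos hLpos hZ).ne'
        (Finset.prod_pos fun t _ => div_pos (hmg2pos t) (hmgpos t)).ne']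
      rw [Real.log_prod (fun t _ => (div_pos (hmg2pos t) (hmgpos t)).ne')]
      ring
  -- inner : per (t,c) rewriting of the conditional entropy
  have inner : ∀ (t : Fin n) (c : Fin J),
      (mgd w t.succ c / Z)
          * (-(∑ i : Fin J,
              (if 0 < mgd w t.succ c then mg2d w t i c / mgd w t.succ c else 0)
              * Real.log (if 0 < mgd w t.succ c then mg2d w t i c / mgd w t.succ c else 0)))
        = -(∑ i : Fin J, (mg2d w t i c / Z) * Real.log (mg2d w t i c / mgd w t.succ c)) := by
    intro t c
    by_cases h : 0 < mgd w t.succ c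
    · simp only [h, if_true]
      rw [mul_neg, neg_inj, Finset.mul_sum]
      refine Finset.sum_congr rfl fun i _ => ?_
      have hne : mgd w t.succ c ≠ 0 := h.ne'
      field_simp
    · have h0 : mgd w t.succ c = 0 := le_antisymm (not_lt.mp h) (hmg_nonneg _ _)
      have h20 : ∀ i, mg2d w t i c = 0 :=
        fun i => le_antisymm (h0 ▸ hmg2_le_mg t i c) (hmg2_nonneg _ _ _)
      simp only [h, if_false, h0]
      simp [h20]
  -- marginalization lemmas
  have marg1 : ∀ G : Fin J → ℝ,
      (∑ a : Fin (n+1) → Fin J, (w a / Z) * G (a (Fin.last n)))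
        = ∑ j, (mgd w (Fin.last n) j / Z) * G j := by
    intro G
    have h1 : ∀ a : Fin (n+1) → Fin J, (w a / Z) * G (a (Fin.last n))
        = ∑ j, if a (Fin.last n) = j then (w a / Z) * G j else 0 := by
      intro a
      rw [Finset.sum_ite_eq]
      simp
    rw [Finset.sum_congr rfl (fun a _ => h1 a), Finset.sum_comm]
    refine Finset.sum_congr rfl fun j _ => ?_
    rw [mgd, Finset.sum_div, Finset.sum_mul]
    refine Finset.sum_congr rfl fun a _ => ?_
    by_cases h : a (Fin.last n) = j <;> simp [h]
  have marg2 : ∀ (t : Fin n) (G : Fin J → Fin J → ℝ),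
      (∑ a : Fin (n+1) → Fin J, (w a / Z) * G (a t.castSucc) (a t.succ))
        = ∑ i, ∑ c, (mg2d w t i c / Z) * G i c := by
    intro t G
    have h1 : ∀ a : Fin (n+1) → Fin J, (w a / Z) * G (a t.castSucc) (a t.succ)
        = ∑ i, ∑ c, if a t.castSucc = i ∧ a t.succ = c then (w a / Z) * G i c else 0 := by
      intro a
      have h2 : ∀ i, (∑ c, if a t.castSucc = i ∧ a t.succ = c then (w a / Z) * G i c else 0)
          = if a t.castSucc = i then (w a / Z) * G i (a t.succ) else 0 := by
        intro i
        by_cases h : a t.castSucc = i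
        · simp [h]
        · simp [h]
      rw [Finset.sum_congr rfl (fun i _ => h2 i), Finset.sum_ite_eq]
      simp
    rw [Finset.sum_congr rfl (fun a _ => h1 a), Finset.sum_comm]
    refine Finset.sum_congr rfl fun i _ => ?_
    rw [Finset.sum_comm]
    refine Finset.sum_congr rfl fun c _ => ?_
    rw [mg2d, Finset.sum_div, Finset.sum_mul]
    refine Finset.sum_congr rfl fun a _ => ?_
    by_cases h : a t.castSucc = i ∧ a t.succ = c <;> simp [h]
  -- assembly
  rw [Finset.sum_congr rfl (fun a _ => step2 a)]
  have expand : ∀ a : Fin (n+1) → Fin J,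
      (w a / Z) * ((∑ t : Fin n,
          Real.log (mg2d w t (a t.castSucc) (a t.succ) / mgd w t.succ (a t.succ)))
          + Real.log (mgd w (Fin.last n) (a (Fin.last n)) / Z))
      = (∑ t : Fin n, (w a / Z) * Real.log (mg2d w t (a t.castSucc) (a t.succ) / mgd w t.succ (a t.succ)))
          + (w a / Z) * Real.log (mgd w (Fin.last n) (a (Fin.last n)) / Z) := by
    intro a
    rw [mul_add, Finset.mul_sum]
  rw [Finset.sum_congr rfl (fun a _ => expand a)]
  rw [Finset.sum_add_distrib, Finset.sum_comm]
  rw [marg1 (fun j => Real.log (mgd w (Fin.last n) j / Z))]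
  have hmid : ∀ t : Fin n,
      (∑ a : Fin (n+1) → Fin J,
        (w a / Z) * Real.log (mg2d w t (a t.castSucc) (a t.succ) / mgd w t.succ (a t.succ)))
      = ∑ i, ∑ c, (mg2d w t i c / Z) * Real.log (mg2d w t i c / mgd w t.succ c) :=
    fun t => marg2 t (fun i c => Real.log (mg2d w t i c / mgd w t.succ c))
  rw [Finset.sum_congr rfl (fun t _ => hmid t)]
  rw [Finset.sum_congr rfl (fun (t : Fin n) _ => Finset.sum_congr rfl (fun (c : Fin J) _ => inner t c))]
  -- now pure algebra on sums
  rw [neg_add]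
  congr 1
  rw [← Finset.sum_neg_distrib]
  refine Finset.sum_congr rfl fun t _ => ?_
  simp only [Finset.sum_neg_distrib]
  rw [neg_inj]
  exact Finset.sum_comm

end HMCAux

namespace HMCModel
open HMCAux Finset
set_option linter.unusedSectionVars false

variable {J V : ℕ} [NeZero J]

noncomputable def vvB {n : ℕ} (M : HMCModel J V (n+1)) (x : Fin (n+1) → Fin V) : Fin J → ℝ :=
  fun j => M.init j * M.emit j (x 0)

noncomputable def AAB {n : ℕ} (M : HMCModel J V (n+1)) (x : Fin (n+1) → Fin V) :
    ℕ → Fin J → Fin J → ℝ :=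
  fun t i j => if h : t + 1 < n + 1 then M.trans i j * M.emit j (x ⟨t+1, h⟩) else 0

lemma joint_eq_cw {n : ℕ} (M : HMCModel J V (n+1)) (x : Fin (n+1) → Fin V)
    (s : Fin (n+1) → Fin J) : M.joint s x = cw (vvB M x) (AAB M x) n s := by
  unfold joint cw vvB
  congr 1
  have himg : (Finset.univ.filter (fun t : Fin (n+1) => t ≠ 0)) = Finset.univ.image Fin.succ := by
    ext t
    simp only [Finset.mem_filter, Finset.mem_univ, true_and, Finset.mem_image]
    constructor
    · intro ht; exact ⟨t.pred ht, by simp⟩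
    · rintro ⟨u, _, rfl⟩; exact Fin.succ_ne_zero u
  rw [himg, Finset.prod_image (fun a _ b _ h => Fin.succ_injective n h)]
  refine Finset.prod_congr rfl fun t _ => ?_
  have h1 : (t.succ : Fin (n+1)) - 1 = t.castSucc := by
    ext
    rw [Fin.coe_sub_one]
    simp [Fin.succ_ne_zero]
  have h2 : AAB M x t (s t.castSucc) (s t.succ)
      = M.trans (s t.castSucc) (s t.succ) * M.emit (s t.succ) (x t.succ) := by
    unfold AAB
    rw [dif_pos (by omega : (t:ℕ) + 1 < n + 1)]
    rfl
  rw [h1, h2]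

end HMCModel

open HMCModel

/-- In a hidden Markov chain model, the conditional entropy of the
state sequence given the observed sequence decomposes additively as a sum of
entropies conditioned on the future state:
`H(S | X = x) = ∑_{t=0}^{T-2} H(S_t | S_{t+1}, X = x) + H(S_{T-1} | X = x)`. -/
theorem hmc_entropy_decomposition_future
    {J V T : ℕ} [NeZero J] [NeZero T] (M : HMCModel J V T)
    (x : Fin T → Fin V) (hx : 0 < M.pr (obsEq x)) :
    M.condEnt (fun s => s) (obsEq x)
      = (∑ t ∈ Finset.univ.filter (fun t : Fin T => (t : ℕ) < T - 1),
            M.condEntGiven (fun s => s t) (fun s => s (t + 1)) (obsEq x))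
        + M.condEnt
            (fun s => s ⟨T - 1, Nat.sub_lt (Nat.pos_of_ne_zero (NeZero.ne T)) Nat.one_pos⟩)
            (obsEq x) := by
  classical
  obtain ⟨n, rfl⟩ : ∃ n, T = n + 1 :=
    ⟨T - 1, (Nat.succ_pred_eq_of_pos (Nat.pos_of_ne_zero (NeZero.ne T))).symm⟩
  set w : (Fin (n+1) → Fin J) → ℝ := fun s => M.joint s x with hwdef
  set Z : ℝ := M.pr (obsEq x) with hZdef
  have hZ : 0 < Z := hx
  have hw_nonneg : ∀ s, 0 ≤ w s := by
    intro s
    show 0 ≤ M.joint s x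
    unfold HMCModel.joint
    refine mul_nonneg (mul_nonneg (M.init_nonneg _) (M.emit_nonneg _ _)) ?_
    exact Finset.prod_nonneg fun t _ => mul_nonneg (M.trans_nonneg _ _) (M.emit_nonneg _ _)
  have prP : ∀ P : (Fin (n+1) → Fin J) → Prop,
      M.pr (fun s y => P s ∧ obsEq x s y) = ∑ s, if P s then w s else 0 := by
    intro P
    unfold HMCModel.pr HMCModel.obsEq
    refine Finset.sum_congr rfl fun s _ => ?_
    by_cases h : P s
    · simp [h, hwdef]
    · simp [h]
  have prP2 : ∀ P Q : (Fin (n+1) → Fin J) → Prop,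
      M.pr (fun s y => P s ∧ (Q s ∧ obsEq x s y)) = ∑ s, if P s ∧ Q s then w s else 0 := by
    intro P Q
    unfold HMCModel.pr HMCModel.obsEq
    refine Finset.sum_congr rfl fun s _ => ?_
    by_cases hP : P s
    · by_cases hQ : Q s
      · simp [hP, hQ, hwdef]
      · simp [hP, hQ]
    · simp [hP]
  have hZsum : Z = ∑ s, w s := by
    rw [hZdef]
    unfold HMCModel.pr HMCModel.obsEq
    refine Finset.sum_congr rfl fun s _ => ?_
    exact HMCAux.sum_ite_eq_any x (fun y => M.joint s y) _
  have prMg : ∀ (r : Fin (n+1)) (c : Fin J),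
      M.pr (fun s y => s r = c ∧ obsEq x s y) = HMCAux.mgd w r c := by
    intro r c
    rw [prP (fun s => s r = c), HMCAux.mgd]
    exact Finset.sum_congr rfl fun s _ => HMCAux.iteSwap _ _ Iff.rfl rfl rfl
  have prMg2 : ∀ (t : Fin n) (i c : Fin J),
      M.pr (fun s y => s t.castSucc = i ∧ (s t.succ = c ∧ obsEq x s y)) = HMCAux.mg2d w t i c := by
    intro t i c
    rw [prP2 (fun s => s t.castSucc = i) (fun s => s t.succ = c), HMCAux.mg2d]
    exact Finset.sum_congr rfl fun s _ => HMCAux.iteSwap _ _ Iff.rfl rfl rfl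
  -- conditional probability computations
  have c1 : ∀ a : Fin (n+1) → Fin J, M.cpr (fun s _ => s = a) (obsEq x) = w a / Z := by
    intro a
    unfold HMCModel.cpr
    rw [if_pos hx, prP (fun s => s = a)]
    exact congrArg₂ (· / ·) (HMCAux.sum_ite_eq_any a w _) rfl
  have c2 : ∀ (r : Fin (n+1)) (c : Fin J),
      M.cpr (fun s _ => s r = c) (obsEq x) = HMCAux.mgd w r c / Z := by
    intro r c
    unfold HMCModel.cpr
    rw [if_pos hx, prMg r c]
  have c3 : ∀ (t : Fin n) (i c : Fin J),
      M.cpr (fun s _ => s t.castSucc = i) (fun s y => s t.succ = c ∧ obsEq x s y)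
        = if 0 < HMCAux.mgd w t.succ c then HMCAux.mg2d w t i c / HMCAux.mgd w t.succ c else 0 := by
    intro t i c
    unfold HMCModel.cpr
    rw [prMg t.succ c]
    by_cases h : 0 < HMCAux.mgd w t.succ c
    · rw [if_pos h, if_pos h, prMg2 t i c]
    · rw [if_neg h, if_neg h]
  -- the Markov identity via forward/backward factorization
  have hveq : ∀ s, w s = HMCAux.cw (vvB M x) (AAB M x) n s := fun s => joint_eq_cw M x s
  have hmg : ∀ (r : Fin (n+1)) (j : Fin J),
      HMCAux.mgd w r j = HMCAux.ac (vvB M x) (AAB M x) (r : ℕ) j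
        * HMCAux.bf (AAB M x) (fun _ => (1:ℝ)) (n - (r : ℕ)) (r : ℕ) j := by
    intro r j
    rw [HMCAux.mgd, ← HMCAux.fact_gen (vvB M x) (AAB M x) n (fun _ => (1:ℝ)) (r : ℕ)
      (Nat.lt_succ_iff.mp r.isLt) j]
    exact Finset.sum_congr rfl fun s _ => HMCAux.iteSwap _ _ Iff.rfl (by rw [hveq s, mul_one]) rfl
  have hmg2 : ∀ (t : Fin n) (i j : Fin J),
      HMCAux.mg2d w t i j = HMCAux.ac (vvB M x) (AAB M x) (t : ℕ) i
        * AAB M x (t : ℕ) i j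
        * HMCAux.bf (AAB M x) (fun _ => (1:ℝ)) (n - ((t : ℕ)+1)) ((t : ℕ)+1) j := by
    intro t i j
    rw [HMCAux.mg2d, ← HMCAux.fact_pair (vvB M x) (AAB M x) n (fun _ => (1:ℝ)) (t : ℕ) t.isLt i j]
    exact Finset.sum_congr rfl fun s _ => HMCAux.iteSwap _ _ Iff.rfl (by rw [hveq s, mul_one]) rfl
  have markov : ∀ s : Fin (n+1) → Fin J,
      w s * ∏ t : Fin n, HMCAux.mgd w t.succ (s t.succ)
        = HMCAux.mgd w (Fin.last n) (s (Fin.last n))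
          * ∏ t : Fin n, HMCAux.mg2d w t (s t.castSucc) (s t.succ) := by
    intro s
    rw [Finset.prod_congr rfl (fun (t : Fin n) (_ : t ∈ Finset.univ) => hmg t.succ (s t.succ)),
      Finset.prod_congr rfl (fun (t : Fin n) (_ : t ∈ Finset.univ) => hmg2 t (s t.castSucc) (s t.succ)),
      hmg (Fin.last n) (s (Fin.last n)), hveq s]
    simp only [Fin.val_succ, Fin.val_last]
    rw [Nat.sub_self]
    rw [show HMCAux.bf (AAB M x) (fun _ => (1:ℝ)) 0 n (s (Fin.last n)) = 1 from rfl]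
    rw [show HMCAux.cw (vvB M x) (AAB M x) n s
        = HMCAux.ac (vvB M x) (AAB M x) 0 (s 0)
          * ∏ t : Fin n, AAB M x (t : ℕ) (s t.castSucc) (s t.succ) from rfl]
    rw [Finset.prod_mul_distrib, Finset.prod_mul_distrib, Finset.prod_mul_distrib]
    have hprod : HMCAux.ac (vvB M x) (AAB M x) 0 (s 0)
        * ∏ t : Fin n, HMCAux.ac (vvB M x) (AAB M x) ((t : ℕ) + 1) (s t.succ)
        = HMCAux.ac (vvB M x) (AAB M x) n (s (Fin.last n))
          * ∏ t : Fin n, HMCAux.ac (vvB M x) (AAB M x) (t : ℕ) (s t.castSucc) := by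
      have h1 := Fin.prod_univ_succ (fun r : Fin (n+1) => HMCAux.ac (vvB M x) (AAB M x) (r : ℕ) (s r))
      have h2 := Fin.prod_univ_castSucc (fun r : Fin (n+1) => HMCAux.ac (vvB M x) (AAB M x) (r : ℕ) (s r))
      simp only [Fin.val_succ, Fin.val_last, Fin.val_zero, Fin.coe_castSucc] at h1 h2
      rw [← h1, h2]
      ring
    linear_combination
      ((∏ t : Fin n, AAB M x (t : ℕ) (s t.castSucc) (s t.succ))
        * ∏ t : Fin n, HMCAux.bf (AAB M x) (fun _ => (1:ℝ)) (n - ((t : ℕ)+1)) ((t : ℕ)+1) (s t.succ)) * hprod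
  -- rewrite the three pieces of the goal
  have e1 : M.condEnt (fun s => s) (obsEq x) = -∑ a, (w a / Z) * Real.log (w a / Z) := by
    unfold HMCModel.condEnt
    refine congrArg Neg.neg (Finset.sum_congr rfl fun a _ => ?_)
    rw [c1 a]
  have hL : ∀ (h : n + 1 - 1 < n + 1), (⟨n + 1 - 1, h⟩ : Fin (n+1)) = Fin.last n := by
    intro h; ext; simp
  have e3 : M.condEnt
      (fun s => s ⟨n + 1 - 1, Nat.sub_lt (Nat.pos_of_ne_zero (NeZero.ne (n+1))) Nat.one_pos⟩)
      (obsEq x)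
      = -∑ j, (HMCAux.mgd w (Fin.last n) j / Z) * Real.log (HMCAux.mgd w (Fin.last n) j / Z) := by
    simp only [hL]
    unfold HMCModel.condEnt
    refine congrArg Neg.neg (Finset.sum_congr rfl fun j _ => ?_)
    rw [c2 (Fin.last n) j]
  have e2 : ∀ t : Fin n,
      M.condEntGiven (fun s => s t.castSucc) (fun s => s t.succ) (obsEq x)
        = ∑ c : Fin J, (HMCAux.mgd w t.succ c / Z)
            * (-(∑ i : Fin J,
                (if 0 < HMCAux.mgd w t.succ c then HMCAux.mg2d w t i c / HMCAux.mgd w t.succ c else 0)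
                * Real.log (if 0 < HMCAux.mgd w t.succ c then HMCAux.mg2d w t i c / HMCAux.mgd w t.succ c else 0))) := by
    intro t
    unfold HMCModel.condEntGiven HMCModel.condEnt
    refine Finset.sum_congr rfl fun c _ => ?_
    rw [c2 t.succ c]
    congr 1
    refine congrArg Neg.neg (Finset.sum_congr rfl fun i _ => ?_)
    rw [c3 t i c]
  have hfilter : Finset.univ.filter (fun t : Fin (n+1) => (t : ℕ) < n + 1 - 1)
      = Finset.univ.image Fin.castSucc := by
    ext t
    simp only [Finset.mem_filter, Finset.mem_univ, true_and, Finset.mem_image]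
    constructor
    · intro h
      exact ⟨⟨(t : ℕ), by omega⟩, by ext; simp⟩
    · rintro ⟨u, rfl⟩
      simp only [Fin.coe_castSucc]
      omega
  have hsucc : ∀ u : Fin n, u.castSucc + 1 = u.succ := by
    intro u
    ext
    simp [Fin.val_add_one, Fin.ext_iff, Ne, (Fin.castSucc_lt_last u).ne]
  rw [e1, e3, hfilter, Finset.sum_image (fun a _ b _ h => Fin.castSucc_injective n h)]
  simp only [hsucc]
  rw [Finset.sum_congr rfl (fun (t : Fin n) (_ : t ∈ Finset.univ) => e2 t)]
  exact HMCAux.entropy_key w hw_nonneg Z hZ hZsum markov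
end

section
/- In a hidden Markov chain model, the smoothed probabilities satisfy the backward recursion: for 0 ≤ t ≤ T−2 and every state j, P(S_t = j | X = x) = P(S_t = j | X_0^t = x_0^t) · Σ_k [P(S_{t+1} = k | X = x) / P(S_{t+1} = k | X_0^t = x_0^t)] p_{jk}, where the sum ranges over the states k with P(S_{t+1} = k | X_0^t = x_0^t) > 0, and where P(S_{t+1} = k | X_0^t = x_0^t) = Σ_i p_{ik} P(S_t = i | X_0^t = x_0^t). -/
open Finset

set_option linter.unusedSectionVars false
set_option maxHeartbeats 1000000

section chain

variable {J : ℕ}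

/-- Backward chain sum, recursively defined. -/
noncomputable def csum (f : Fin J → Fin J → ℕ → ℝ) : ℕ → Fin J → ℝ
  | 0, _ => 1
  | n+1, i => ∑ k, f i k 0 * csum (fun a b q => f a b (q+1)) n k

/-- Forward variable, front-folding. -/
noncomputable def fwd (f : Fin J → Fin J → ℕ → ℝ) : ℕ → (Fin J → ℝ) → Fin J → ℝ
  | 0, ψ => ψ
  | m+1, ψ => fwd (fun a b q => f a b (q+1)) m (fun k => ∑ i, ψ i * f i k 0)

lemma csum_congr {f f' : Fin J → Fin J → ℕ → ℝ} (n : ℕ)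
    (h : ∀ a b q, q < n → f a b q = f' a b q) (i : Fin J) : csum f n i = csum f' n i := by
  induction n generalizing f f' i with
  | zero => rfl
  | succ n ih =>
    simp only [csum]
    refine Finset.sum_congr rfl fun k _ => ?_
    rw [h _ _ 0 (by omega), ih (fun a b q hq => h a b (q+1) (by omega)) k]

lemma csum_eq_one {f : Fin J → Fin J → ℕ → ℝ} (n : ℕ)
    (h : ∀ a q, ∑ b, f a b q = 1) (i : Fin J) : csum f n i = 1 := by
  induction n generalizing f i with
  | zero => rfl
  | succ n ih =>
    simp only [csum]
    calc ∑ k, f i k 0 * csum (fun a b q => f a b (q+1)) n k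
        = ∑ k, f i k 0 := by
          exact Finset.sum_congr rfl fun k _ => by rw [ih (fun a q => h a (q+1)) k, mul_one]
      _ = 1 := h i 0

lemma csum_nonneg {f : Fin J → Fin J → ℕ → ℝ} (n : ℕ)
    (h : ∀ a b q, 0 ≤ f a b q) (i : Fin J) : 0 ≤ csum f n i := by
  induction n generalizing f i with
  | zero => exact zero_le_one
  | succ n ih =>
    exact Finset.sum_nonneg fun k _ => mul_nonneg (h _ _ _) (ih (fun a b q => h a b (q+1)) k)

lemma csum_le_one {f : Fin J → Fin J → ℕ → ℝ} (n : ℕ)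
    (h0 : ∀ a b q, 0 ≤ f a b q) (h1 : ∀ a q, ∑ b, f a b q ≤ 1) (i : Fin J) :
    csum f n i ≤ 1 := by
  induction n generalizing f i with
  | zero => exact le_refl 1
  | succ n ih =>
    simp only [csum]
    calc ∑ k, f i k 0 * csum (fun a b q => f a b (q+1)) n k
        ≤ ∑ k, f i k 0 * 1 := by
          refine Finset.sum_le_sum fun k _ => ?_
          exact mul_le_mul_of_nonneg_left
            (ih (fun a b q => h0 a b (q+1)) (fun a q => h1 a (q+1)) k) (h0 _ _ _)
      _ ≤ 1 := by simpa using h1 i 0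

lemma fwd_succ (f : Fin J → Fin J → ℕ → ℝ) (m : ℕ) (ψ : Fin J → ℝ) (j : Fin J) :
    fwd f (m+1) ψ j = ∑ i, fwd f m ψ i * f i j m := by
  induction m generalizing f ψ with
  | zero => rfl
  | succ m ih =>
    show fwd (fun a b q => f a b (q+1)) (m+1) (fun k => ∑ i, ψ i * f i k 0) j = _
    rw [ih]
    rfl

lemma fwd_congr {f f' : Fin J → Fin J → ℕ → ℝ} (m : ℕ)
    (h : ∀ a b q, q < m → f a b q = f' a b q) (ψ : Fin J → ℝ) (j : Fin J) :
    fwd f m ψ j = fwd f' m ψ j := by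
  induction m generalizing f f' ψ j with
  | zero => rfl
  | succ m ih =>
    show fwd (fun a b q => f a b (q+1)) m (fun k => ∑ i, ψ i * f i k 0) j = _
    rw [ih (fun a b q hq => h a b (q+1) (by omega))]
    have : (fun k => ∑ i, ψ i * f i k 0) = (fun k => ∑ i, ψ i * f' i k 0) := by
      funext k; exact Finset.sum_congr rfl fun i _ => by rw [h i k 0 (by omega)]
    rw [this]
    rfl

lemma fwd_nonneg {f : Fin J → Fin J → ℕ → ℝ} (m : ℕ)
    (h : ∀ a b q, 0 ≤ f a b q) {ψ : Fin J → ℝ} (hψ : ∀ i, 0 ≤ ψ i) (j : Fin J) :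
    0 ≤ fwd f m ψ j := by
  induction m generalizing f ψ j with
  | zero => exact hψ j
  | succ m ih =>
    exact ih (fun a b q => h a b (q+1))
      (fun k => Finset.sum_nonneg fun i _ => mul_nonneg (hψ i) (h _ _ _)) j

/-- Peeling the first coordinate of a path sum. -/
lemma peel (n : ℕ) (ψ : Fin J → ℝ) (f : Fin J → Fin J → ℕ → ℝ)
    (G : (Fin (n+1) → Fin J) → ℝ) :
    ∑ s : Fin (n+2) → Fin J,
      (ψ (s 0) * ∏ q : Fin (n+1), f (s q.castSucc) (s q.succ) q.val) * G (Fin.tail s)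
    = ∑ w : Fin (n+1) → Fin J,
      ((∑ i, ψ i * f i (w 0) 0) * ∏ q : Fin n, f (w q.castSucc) (w q.succ) (q.val+1)) * G w := by
  set F : (Fin (n+2) → Fin J) → ℝ := fun s =>
    (ψ (s 0) * ∏ q : Fin (n+1), f (s q.castSucc) (s q.succ) q.val) * G (Fin.tail s) with hF
  have h1 : ∑ s : Fin (n+2) → Fin J, F s
      = ∑ p : Fin J × (Fin (n+1) → Fin J), F (Fin.cons p.1 p.2) :=
    ((Fin.consEquiv (fun _ : Fin (n+2) => Fin J)).sum_comp F).symm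
  rw [h1, Fintype.sum_prod_type, Finset.sum_comm]
  refine Finset.sum_congr rfl fun w _ => ?_
  have h2 : ∀ i : Fin J, F (Fin.cons i w)
      = (ψ i * (f i (w 0) 0 * ∏ q : Fin n, f (w q.castSucc) (w q.succ) (q.val+1))) * G w := by
    intro i
    rw [hF]
    simp only [Fin.tail_cons, Fin.cons_zero]
    have hpr : (∏ q : Fin (n+1), f (Fin.cons (α := fun _ => Fin J) i w q.castSucc)
          (Fin.cons (α := fun _ => Fin J) i w q.succ) q.val)
        = f i (w 0) 0 * ∏ q : Fin n, f (w q.castSucc) (w q.succ) (q.val+1) := by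
      rw [Fin.prod_univ_succ]
      have hfst : f (Fin.cons (α := fun _ => Fin J) i w (0:Fin (n+1)).castSucc)
            (Fin.cons (α := fun _ => Fin J) i w (0:Fin (n+1)).succ) (0:Fin (n+1)).val
          = f i (w 0) 0 := by
        rw [Fin.castSucc_zero, Fin.cons_zero, Fin.succ_zero_eq_one', Fin.cons_one, Fin.val_zero]
      rw [hfst]
      congr 1
    rw [hpr]
  rw [Finset.sum_congr rfl (fun i _ => h2 i), Finset.sum_mul, Finset.sum_mul]
  refine Finset.sum_congr rfl fun i _ => by ring

lemma psum (n : ℕ) (ψ : Fin J → ℝ) (f : Fin J → Fin J → ℕ → ℝ) :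
    ∑ s : Fin (n+1) → Fin J, ψ (s 0) * ∏ q : Fin n, f (s q.castSucc) (s q.succ) q.val
    = ∑ i, ψ i * csum f n i := by
  induction n generalizing ψ f with
  | zero =>
    rw [← (Equiv.funUnique (Fin 1) (Fin J)).symm.sum_comp]
    simp [csum]
  | succ n ih =>
    have hp := peel n ψ f (fun _ => 1)
    simp only [mul_one] at hp
    rw [hp]
    refine (ih (fun k => ∑ i, ψ i * f i k 0) (fun a b q => f a b (q+1))).trans ?_
    simp only [csum, Finset.sum_mul, Finset.mul_sum]
    rw [Finset.sum_comm]
    refine Finset.sum_congr rfl fun i _ => Finset.sum_congr rfl fun k _ => by ring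

/-- The master splitting lemma. -/
lemma main_split (m : ℕ) : ∀ (n : ℕ) (hm : m ≤ n) (ψ : Fin J → ℝ)
    (f : Fin J → Fin J → ℕ → ℝ) (g : Fin J → ℝ),
    ∑ s : Fin (n+1) → Fin J,
      (ψ (s 0) * ∏ q : Fin n, f (s q.castSucc) (s q.succ) q.val) * g (s ⟨m, Nat.lt_succ_of_le hm⟩)
    = ∑ j, fwd f m ψ j * g j * csum (fun a b q => f a b (q + m)) (n - m) j := by
  induction m with
  | zero =>
    intro n hm ψ f g
    have h0 : ∀ s : Fin (n+1) → Fin J, s ⟨0, Nat.lt_succ_of_le hm⟩ = s 0 := fun s => rfl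
    have key : ∑ s : Fin (n+1) → Fin J,
        (fun i => ψ i * g i) (s 0) * ∏ q : Fin n, f (s q.castSucc) (s q.succ) q.val
        = ∑ i, (fun i => ψ i * g i) i * csum f n i := psum n (fun i => ψ i * g i) f
    simp only at key
    calc ∑ s : Fin (n+1) → Fin J,
          (ψ (s 0) * ∏ q : Fin n, f (s q.castSucc) (s q.succ) q.val) * g (s ⟨0, Nat.lt_succ_of_le hm⟩)
        = ∑ s : Fin (n+1) → Fin J,
          ψ (s 0) * g (s 0) * ∏ q : Fin n, f (s q.castSucc) (s q.succ) q.val := by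
          refine Finset.sum_congr rfl fun s _ => ?_
          rw [h0 s]; ring
      _ = ∑ i, ψ i * g i * csum f n i := key
      _ = ∑ j, fwd f 0 ψ j * g j * csum (fun a b q => f a b (q + 0)) (n - 0) j := by
          refine Finset.sum_congr rfl fun i _ => ?_
          have : (fun (a b : Fin J) (q : ℕ) => f a b (q + 0)) = f := rfl
          rw [this]
          rfl
  | succ m ih =>
    intro n hm ψ f g
    obtain ⟨n', rfl⟩ : ∃ n', n = n' + 1 := ⟨n - 1, by omega⟩
    have hpin : ∀ s : Fin (n'+2) → Fin J,
        s ⟨m+1, Nat.lt_succ_of_le hm⟩ = Fin.tail s ⟨m, Nat.lt_succ_of_le (by omega)⟩ := by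
      intro s; rfl
    have hp := peel n' ψ f (fun w => g (w ⟨m, Nat.lt_succ_of_le (by omega : m ≤ n')⟩))
    calc ∑ s : Fin (n'+2) → Fin J,
          (ψ (s 0) * ∏ q : Fin (n'+1), f (s q.castSucc) (s q.succ) q.val)
            * g (s ⟨m+1, Nat.lt_succ_of_le hm⟩)
        = ∑ w : Fin (n'+1) → Fin J,
          ((∑ i, ψ i * f i (w 0) 0) * ∏ q : Fin n', f (w q.castSucc) (w q.succ) (q.val+1))
            * g (w ⟨m, Nat.lt_succ_of_le (by omega : m ≤ n')⟩) := by
          rw [← hp]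
          exact Finset.sum_congr rfl fun s _ => by rw [hpin s]
      _ = ∑ j, fwd (fun a b q => f a b (q+1)) m (fun k => ∑ i, ψ i * f i k 0) j * g j *
            csum (fun a b q => f a b ((q + m) + 1)) (n' - m) j :=
          ih n' (by omega) (fun k => ∑ i, ψ i * f i k 0) (fun a b q => f a b (q+1)) g
      _ = ∑ j, fwd f (m+1) ψ j * g j * csum (fun a b q => f a b (q + (m+1))) (n'+1 - (m+1)) j := by
          refine Finset.sum_congr rfl fun j _ => ?_
          have h1 : fwd (fun a b q => f a b (q+1)) m (fun k => ∑ i, ψ i * f i k 0) j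
              = fwd f (m+1) ψ j := rfl
          have hnn : n' + 1 - (m + 1) = n' - m := by omega
          have h2 : csum (fun a b q => f a b (q + m + 1)) (n' - m) j
              = csum (fun a b q => f a b (q + (m+1))) (n' + 1 - (m+1)) j := by
            rw [hnn]
            exact csum_congr _ (fun a b q _ => by rw [show q + m + 1 = q + (m+1) from rfl]) j
          rw [h1, ← h2]

end chain


section bridge

variable {J V N : ℕ} (M : HMCModel J V (N+1)) (x : Fin (N+1) → Fin V)

/-- Initial weight. -/
noncomputable def psi0 : Fin J → ℝ := fun i => M.init i * M.emit i (x 0)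

/-- Transition-emission weight, all emissions observed. -/
noncomputable def fXw : Fin J → Fin J → ℕ → ℝ := fun a b q =>
  M.trans a b * (if h : q < N then M.emit b (x ⟨q+1, by omega⟩) else 1)

/-- Transition-emission weight, emissions observed only up to time `t`. -/
noncomputable def fEw (t : Fin (N+1)) : Fin J → Fin J → ℕ → ℝ := fun a b q =>
  M.trans a b * (if h : q < t.val then M.emit b (x ⟨q+1, by have := t.isLt; omega⟩) else 1)

lemma prod_filter_ne_zero' (g : Fin (N+1) → ℝ) :
    ∏ r ∈ Finset.univ.filter (fun r : Fin (N+1) => r ≠ 0), g r = ∏ q : Fin N, g q.succ := by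
  rw [Finset.prod_filter, Fin.prod_univ_succ]
  simp [Fin.succ_ne_zero]

lemma succ_sub_one'' {N : ℕ} (q : Fin N) : (q.succ : Fin (N+1)) - 1 = q.castSucc := by
  ext
  rw [Fin.coe_sub_one]
  simp [Fin.succ_ne_zero]

/-- The joint law, chain form, all emissions at `x`. -/
lemma joint_chain (s : Fin (N+1) → Fin J) :
    M.joint s x = psi0 M x (s 0) * ∏ q : Fin N, fXw M x (s q.castSucc) (s q.succ) q.val := by
  unfold HMCModel.joint psi0
  rw [prod_filter_ne_zero']
  congr 1
  refine Finset.prod_congr rfl fun q _ => ?_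
  rw [succ_sub_one'']
  unfold fXw
  rw [dif_pos q.isLt]
  rfl

/-- The joint law, with emissions isolated. -/
lemma joint_split (s : Fin (N+1) → Fin J) (y : Fin (N+1) → Fin V) :
    M.joint s y = (M.init (s 0) * ∏ q : Fin N, M.trans (s q.castSucc) (s q.succ))
      * ∏ r : Fin (N+1), M.emit (s r) (y r) := by
  unfold HMCModel.joint
  rw [prod_filter_ne_zero']
  rw [Finset.prod_mul_distrib]
  rw [Fin.prod_univ_succ (fun r => M.emit (s r) (y r))]
  have h : ∀ q : Fin N, M.trans (s (q.succ - 1)) (s q.succ) = M.trans (s q.castSucc) (s q.succ) :=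
    fun q => by rw [succ_sub_one'']
  rw [Finset.prod_congr rfl fun q _ => h q]
  ring

lemma ysum (h : Fin (N+1) → Fin V → ℝ) (A : Finset (Fin (N+1))) (xx : Fin (N+1) → Fin V) :
    ∑ y : Fin (N+1) → Fin V, (if ∀ r ∈ A, y r = xx r then ∏ r, h r (y r) else 0)
    = (∏ r ∈ A, h r (xx r)) * ∏ r ∈ Aᶜ, (∑ v, h r v) := by
  classical
  have step1 : ∀ y : Fin (N+1) → Fin V,
      (if ∀ r ∈ A, y r = xx r then ∏ r, h r (y r) else 0)
      = ∏ r, (if r ∈ A then (if y r = xx r then h r (y r) else 0) else h r (y r)) := by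
    intro y
    by_cases hy : ∀ r ∈ A, y r = xx r
    · rw [if_pos hy]
      refine Finset.prod_congr rfl fun r _ => ?_
      by_cases hr : r ∈ A
      · rw [if_pos hr, if_pos (hy r hr)]
      · rw [if_neg hr]
    · rw [if_neg hy]
      push_neg at hy
      obtain ⟨r0, hr0, hne⟩ := hy
      symm
      exact Finset.prod_eq_zero (Finset.mem_univ r0) (by rw [if_pos hr0, if_neg hne])
  have hexch : (∏ r : Fin (N+1), ∑ v : Fin V, (if r ∈ A then (if v = xx r then h r v else 0) else h r v))
      = ∑ y : Fin (N+1) → Fin V,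
          ∏ r, (if r ∈ A then (if y r = xx r then h r (y r) else 0) else h r (y r)) := by
    rw [Finset.prod_univ_sum]
    rw [Fintype.piFinset_univ]
  rw [Finset.sum_congr rfl fun y _ => step1 y]
  rw [← hexch]
  rw [← Finset.prod_mul_prod_compl A]
  congr 1
  · refine Finset.prod_congr rfl fun r hr => ?_
    calc ∑ v, (if r ∈ A then (if v = xx r then h r v else 0) else h r v)
        = ∑ v, (if v = xx r then h r v else 0) :=
          Finset.sum_congr rfl fun v _ => by rw [if_pos hr]
      _ = h r (xx r) := by simp
  · refine Finset.prod_congr rfl fun r hr => ?_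
    rw [Finset.mem_compl] at hr
    exact Finset.sum_congr rfl fun v _ => by rw [if_neg hr]

lemma pr_congr {E E' : (Fin (N+1) → Fin J) → (Fin (N+1) → Fin V) → Prop}
    (h : ∀ s y, E s y ↔ E' s y) : M.pr E = M.pr E' := by
  unfold HMCModel.pr
  refine Finset.sum_congr rfl fun s _ => Finset.sum_congr rfl fun y _ => ?_
  by_cases hE : E s y
  · rw [if_pos hE, if_pos ((h s y).mp hE)]
  · rw [if_neg hE, if_neg (fun h' => hE ((h s y).mpr h'))]

open Classical in
lemma pr_and_obs (A : (Fin (N+1) → Fin J) → Prop) :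
    M.pr (fun s y => A s ∧ HMCModel.obsEq x s y)
    = ∑ s : Fin (N+1) → Fin J,
        (psi0 M x (s 0) * ∏ q : Fin N, fXw M x (s q.castSucc) (s q.succ) q.val)
          * (if A s then 1 else 0) := by
  unfold HMCModel.pr
  refine Finset.sum_congr rfl fun s _ => ?_
  by_cases hA : A s
  · simp only [hA, true_and, if_true, mul_one]
    calc (∑ y : Fin (N+1) → Fin V, if HMCModel.obsEq x s y then M.joint s y else 0)
        = ∑ y : Fin (N+1) → Fin V, (if y = x then M.joint s y else 0) :=
          Finset.sum_congr rfl fun y _ => by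
            by_cases hy : y = x
            · rw [if_pos (show HMCModel.obsEq x s y from hy), if_pos hy]
            · rw [if_neg (show ¬ HMCModel.obsEq x s y from hy), if_neg hy]
      _ = M.joint s x := by simp
      _ = _ := joint_chain M x s
  · simp [hA]

open Classical in
lemma pr_and_upto (t : Fin (N+1)) (A : (Fin (N+1) → Fin J) → Prop) :
    M.pr (fun s y => A s ∧ ∀ r : Fin (N+1), r ≤ t → y r = x r)
    = ∑ s : Fin (N+1) → Fin J,
        (psi0 M x (s 0) * ∏ q : Fin N, fEw M x t (s q.castSucc) (s q.succ) q.val)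
          * (if A s then 1 else 0) := by
  unfold HMCModel.pr
  refine Finset.sum_congr rfl fun s _ => ?_
  by_cases hA : A s
  case neg => simp [hA]
  simp only [hA, true_and, if_true, mul_one]
  calc (∑ y : Fin (N+1) → Fin V, if (∀ r : Fin (N+1), r ≤ t → y r = x r) then M.joint s y else 0)
      = ∑ y : Fin (N+1) → Fin V,
        (if ∀ r ∈ Finset.univ.filter (fun r : Fin (N+1) => r ≤ t), y r = x r then
          ((M.init (s 0) * ∏ q : Fin N, M.trans (s q.castSucc) (s q.succ))
            * ∏ r : Fin (N+1), M.emit (s r) (y r)) else 0) := by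
        refine Finset.sum_congr rfl fun y _ => ?_
        rw [← joint_split]
        exact if_congr (by simp) rfl rfl
    _ = ∑ y : Fin (N+1) → Fin V,
        (M.init (s 0) * ∏ q : Fin N, M.trans (s q.castSucc) (s q.succ))
          * (if ∀ r ∈ Finset.univ.filter (fun r : Fin (N+1) => r ≤ t), y r = x r then
              (∏ r : Fin (N+1), M.emit (s r) (y r)) else 0) := by
        refine Finset.sum_congr rfl fun y _ => ?_
        by_cases hy : ∀ r ∈ Finset.univ.filter (fun r : Fin (N+1) => r ≤ t), y r = x r
        · rw [if_pos hy, if_pos hy]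
        · rw [if_neg hy, if_neg hy, mul_zero]
    _ = (M.init (s 0) * ∏ q : Fin N, M.trans (s q.castSucc) (s q.succ))
        * ((∏ r ∈ Finset.univ.filter (fun r : Fin (N+1) => r ≤ t), M.emit (s r) (x r))
          * ∏ r ∈ (Finset.univ.filter (fun r : Fin (N+1) => r ≤ t))ᶜ, (∑ v, M.emit (s r) v)) := by
        rw [← Finset.mul_sum, ysum (fun r v => M.emit (s r) v)]
    _ = (M.init (s 0) * ∏ q : Fin N, M.trans (s q.castSucc) (s q.succ))
        * (∏ r ∈ Finset.univ.filter (fun r : Fin (N+1) => r ≤ t), M.emit (s r) (x r)) := by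
        rw [Finset.prod_eq_one fun r _ => M.emit_sum (s r), mul_one]
    _ = (M.init (s 0) * ∏ q : Fin N, M.trans (s q.castSucc) (s q.succ))
        * (M.emit (s 0) (x 0) * ∏ q : Fin N,
            (if q.val < t.val then M.emit (s q.succ) (x q.succ) else 1)) := by
        congr 1
        rw [Finset.prod_filter, Fin.prod_univ_succ, if_pos (Fin.zero_le t)]
        congr 1
    _ = psi0 M x (s 0) * ∏ q : Fin N, fEw M x t (s q.castSucc) (s q.succ) q.val := by
        unfold psi0 fEw
        rw [Finset.prod_mul_distrib]
        have h2 : ∀ q : Fin N, (if h : q.val < t.val then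
              M.emit (s q.succ) (x ⟨q.val+1, by have := t.isLt; omega⟩) else 1)
            = (if q.val < t.val then M.emit (s q.succ) (x q.succ) else 1) := by
          intro q
          by_cases hq : q.val < t.val
          · rw [dif_pos hq, if_pos hq]; rfl
          · rw [dif_neg hq, if_neg hq]
        rw [Finset.prod_congr rfl fun q _ => h2 q]
        ring

/-- `P(S_p = k, X = x)` in forward-backward form. -/
lemma pr_pin_obs (p : ℕ) (hp : p ≤ N) (k : Fin J) :
    M.pr (fun s y => s ⟨p, Nat.lt_succ_of_le hp⟩ = k ∧ HMCModel.obsEq x s y)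
    = fwd (fXw M x) p (psi0 M x) k * csum (fun a b q => fXw M x a b (q + p)) (N - p) k := by
  refine ((pr_and_obs M x _).trans (Finset.sum_congr rfl fun s _ => ?_)).trans
    ((main_split p N hp (psi0 M x) (fXw M x) (fun i => if i = k then 1 else 0)).trans ?_)
  · by_cases hs : s ⟨p, Nat.lt_succ_of_le hp⟩ = k <;> simp [hs]
  · have h3 : ∀ j : Fin J, fwd (fXw M x) p (psi0 M x) j * (if j = k then (1:ℝ) else 0)
          * csum (fun a b q => fXw M x a b (q + p)) (N - p) j
        = if j = k then fwd (fXw M x) p (psi0 M x) j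
            * csum (fun a b q => fXw M x a b (q + p)) (N - p) j else 0 := by
      intro j
      by_cases hj : j = k <;> simp [hj]
    rw [Finset.sum_congr rfl fun j _ => h3 j, Finset.sum_ite_eq' Finset.univ k,
      if_pos (Finset.mem_univ k)]

/-- `P(S_p = k, X_0^t = x_0^t)` in forward form. -/
lemma pr_pin_upto (t : Fin (N+1)) (p : ℕ) (hp : p ≤ N) (k : Fin J) :
    M.pr (fun s y => s ⟨p, Nat.lt_succ_of_le hp⟩ = k ∧ ∀ r : Fin (N+1), r ≤ t → y r = x r)
    = fwd (fEw M x t) p (psi0 M x) k * csum (fun a b q => fEw M x t a b (q + p)) (N - p) k := by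
  refine ((pr_and_upto M x t _).trans (Finset.sum_congr rfl fun s _ => ?_)).trans
    ((main_split p N hp (psi0 M x) (fEw M x t) (fun i => if i = k then 1 else 0)).trans ?_)
  · by_cases hs : s ⟨p, Nat.lt_succ_of_le hp⟩ = k <;> simp [hs]
  · have h3 : ∀ j : Fin J, fwd (fEw M x t) p (psi0 M x) j * (if j = k then (1:ℝ) else 0)
          * csum (fun a b q => fEw M x t a b (q + p)) (N - p) j
        = if j = k then fwd (fEw M x t) p (psi0 M x) j
            * csum (fun a b q => fEw M x t a b (q + p)) (N - p) j else 0 := by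
      intro j
      by_cases hj : j = k <;> simp [hj]
    rw [Finset.sum_congr rfl fun j _ => h3 j, Finset.sum_ite_eq' Finset.univ k,
      if_pos (Finset.mem_univ k)]

/-- `P(X = x)` in forward-backward form. -/
lemma pr_obs_total (p : ℕ) (hp : p ≤ N) :
    M.pr (HMCModel.obsEq x)
    = ∑ j, fwd (fXw M x) p (psi0 M x) j * csum (fun a b q => fXw M x a b (q + p)) (N - p) j := by
  have h1 : M.pr (HMCModel.obsEq x)
      = M.pr (fun s y => (fun _ : Fin (N+1) → Fin J => True) s ∧ HMCModel.obsEq x s y) :=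
    pr_congr M (fun s y => Iff.symm (iff_of_eq (true_and _)))
  rw [h1]
  refine ((pr_and_obs M x _).trans (Finset.sum_congr rfl fun s _ => ?_)).trans
    ((main_split p N hp (psi0 M x) (fXw M x) (fun _ => 1)).trans ?_)
  · rw [if_pos trivial]
  · exact Finset.sum_congr rfl fun j _ => by rw [mul_one]

/-- `P(X_0^t = x_0^t)` in forward form. -/
lemma pr_upto_total (t : Fin (N+1)) (p : ℕ) (hp : p ≤ N) :
    M.pr (fun _ y => ∀ r : Fin (N+1), r ≤ t → y r = x r)
    = ∑ j, fwd (fEw M x t) p (psi0 M x) j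
        * csum (fun a b q => fEw M x t a b (q + p)) (N - p) j := by
  have h1 : M.pr (fun _ y => ∀ r : Fin (N+1), r ≤ t → y r = x r)
      = M.pr (fun s y => (fun _ : Fin (N+1) → Fin J => True) s
          ∧ ∀ r : Fin (N+1), r ≤ t → y r = x r) :=
    pr_congr M (fun s y => Iff.symm (iff_of_eq (true_and _)))
  rw [h1]
  refine ((pr_and_upto M x t _).trans (Finset.sum_congr rfl fun s _ => ?_)).trans
    ((main_split p N hp (psi0 M x) (fEw M x t) (fun _ => 1)).trans ?_)
  · rw [if_pos trivial]
  · exact Finset.sum_congr rfl fun j _ => by rw [mul_one]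

end bridge

lemma final_algebra {J : ℕ} (P Q : ℝ) (hP : 0 < P) (hQ : 0 < Q)
    (a Z E : Fin J → ℝ) (p : Fin J → Fin J → ℝ)
    (ha : ∀ i, 0 ≤ a i) (hp : ∀ i k, 0 ≤ p i k)
    (hZ : ∀ j, Z j = ∑ k, p j k * E k) (j : Fin J) :
    (a j * Z j) / P = a j / Q *
      ∑ k ∈ Finset.univ.filter (fun k => 0 < (∑ i, a i * p i k) / Q),
        ((∑ i, a i * p i k) * E k / P) / ((∑ i, a i * p i k) / Q) * p j k := by
  classical
  set B : Fin J → ℝ := fun k => ∑ i, a i * p i k with hB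
  have hBnn : ∀ k, 0 ≤ B k := fun k => Finset.sum_nonneg fun i _ => mul_nonneg (ha i) (hp i k)
  have hfilter : Finset.univ.filter (fun k => 0 < B k / Q)
      = Finset.univ.filter (fun k => 0 < B k) := by
    refine Finset.filter_congr fun k _ => ?_
    constructor
    · intro h
      by_contra hneg
      push_neg at hneg
      have h2 : B k / Q ≤ 0 := div_nonpos_of_nonpos_of_nonneg hneg (le_of_lt hQ)
      linarith
    · intro h
      exact div_pos h hQ
  rw [hfilter]
  have hterm : ∀ k ∈ Finset.univ.filter (fun k => 0 < B k),
      (B k * E k / P) / (B k / Q) * p j k = p j k * E k * Q / P := by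
    intro k hk
    have hk' : 0 < B k := (Finset.mem_filter.mp hk).2
    have hbne : B k ≠ 0 := ne_of_gt hk'
    field_simp
  rw [Finset.sum_congr rfl hterm]
  have hzero : ∀ k ∈ Finset.univ.filter (fun k => ¬ 0 < B k), a j * (p j k * E k) = 0 := by
    intro k hk
    have hk' : ¬ 0 < B k := (Finset.mem_filter.mp hk).2
    have hBk : B k = 0 := le_antisymm (not_lt.mp hk') (hBnn k)
    have hajp : a j * p j k = 0 := by
      have hall := (Finset.sum_eq_zero_iff_of_nonneg
        (fun i (_ : i ∈ Finset.univ) => mul_nonneg (ha i) (hp i k))).mp hBk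
      exact hall j (Finset.mem_univ j)
    calc a j * (p j k * E k) = (a j * p j k) * E k := by ring
      _ = 0 := by rw [hajp, zero_mul]
  have hsplit : a j * Z j = ∑ k ∈ Finset.univ.filter (fun k => 0 < B k), a j * (p j k * E k) := by
    rw [hZ j, Finset.mul_sum]
    rw [← Finset.sum_filter_add_sum_filter_not Finset.univ (fun k => 0 < B k)
      (fun k => a j * (p j k * E k))]
    rw [Finset.sum_eq_zero hzero, add_zero]
  rw [hsplit, Finset.sum_div, Finset.mul_sum]
  refine Finset.sum_congr rfl fun k _ => ?_
  field_simp


open HMCModel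

/-- In a hidden Markov chain model, the smoothed probabilities
satisfy the backward recursion: for `0 ≤ t ≤ T-2` and every state `j`,
`P(S_t = j | X = x) = P(S_t = j | X_0^t = x_0^t) · ∑_k [P(S_{t+1} = k | X = x) / P(S_{t+1} = k | X_0^t = x_0^t)] p_{jk}`,
the sum ranging over the states `k` with `P(S_{t+1} = k | X_0^t = x_0^t) > 0`, and where
`P(S_{t+1} = k | X_0^t = x_0^t) = ∑_i p_{ik} P(S_t = i | X_0^t = x_0^t)`. -/
theorem hmc_backward_recursion
    {J V T : ℕ} [NeZero J] [NeZero T] (M : HMCModel J V T)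
    (x : Fin T → Fin V) (hx : 0 < M.pr (obsEq x))
    (t : Fin T) (ht : (t : ℕ) < T - 1) (j : Fin J) :
    M.cpr (fun s _ => s t = j) (obsEq x)
      = M.cpr (fun s _ => s t = j) (fun _ y => ∀ r : Fin T, r ≤ t → y r = x r)
          * ∑ k ∈ Finset.univ.filter (fun k : Fin J =>
              0 < M.cpr (fun s _ => s (t + 1) = k) (fun _ y => ∀ r : Fin T, r ≤ t → y r = x r)),
              M.cpr (fun s _ => s (t + 1) = k) (obsEq x)
                / M.cpr (fun s _ => s (t + 1) = k) (fun _ y => ∀ r : Fin T, r ≤ t → y r = x r)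
                * M.trans j k
    ∧ ∀ k : Fin J,
        M.cpr (fun s _ => s (t + 1) = k) (fun _ y => ∀ r : Fin T, r ≤ t → y r = x r)
          = ∑ i : Fin J, M.trans i k *
              M.cpr (fun s _ => s t = i) (fun _ y => ∀ r : Fin T, r ≤ t → y r = x r) := by
  classical
  obtain ⟨N, rfl⟩ : ∃ N, T = N + 1 := ⟨T - 1, by have := NeZero.ne T; omega⟩
  have hmN : (t : ℕ) < N := by simpa using ht
  have hm1 : (t : ℕ) + 1 ≤ N := hmN
  have hlt : t < Fin.last N := by
    rw [Fin.lt_iff_val_lt_val]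
    simpa using hmN
  have ht1 : t + 1 = (⟨(t : ℕ) + 1, Nat.lt_succ_of_le hm1⟩ : Fin (N+1)) := by
    ext
    rw [Fin.val_add_one_of_lt hlt]
  rw [ht1]
  -- basic positivity facts
  have hemit_le_one : ∀ b v, M.emit b v ≤ 1 := by
    intro b v
    calc M.emit b v ≤ ∑ v', M.emit b v' :=
        Finset.single_le_sum (fun v' _ => M.emit_nonneg b v') (Finset.mem_univ v)
      _ = 1 := M.emit_sum b
  have hfX_nonneg : ∀ p b (q : ℕ), 0 ≤ fXw M x p b q := by
    intro p b q
    unfold fXw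
    by_cases h : q < N
    · rw [dif_pos h]
      exact mul_nonneg (M.trans_nonneg _ _) (M.emit_nonneg _ _)
    · rw [dif_neg h, mul_one]
      exact M.trans_nonneg _ _
  have hfX_row_le : ∀ p (q : ℕ), ∑ b, fXw M x p b q ≤ 1 := by
    intro p q
    calc ∑ b, fXw M x p b q ≤ ∑ b, M.trans p b := by
          refine Finset.sum_le_sum fun b _ => ?_
          unfold fXw
          by_cases h : q < N
          · rw [dif_pos h]
            exact mul_le_of_le_one_right (M.trans_nonneg _ _) (hemit_le_one _ _)
          · rw [dif_neg h, mul_one]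
      _ = 1 := M.trans_sum p
  have hpsi_nonneg : ∀ i, 0 ≤ psi0 M x i :=
    fun i => mul_nonneg (M.init_nonneg i) (M.emit_nonneg i _)
  have ha_nonneg : ∀ i, 0 ≤ fwd (fXw M x) (t : ℕ) (psi0 M x) i :=
    fun i => fwd_nonneg _ hfX_nonneg hpsi_nonneg i
  -- fE agrees with fX below t, and has constant rows above
  have hfE_agree : ∀ p b (q : ℕ), q < (t : ℕ) → fEw M x t p b q = fXw M x p b q := by
    intro p b q hq
    unfold fEw fXw
    rw [dif_pos hq, dif_pos (by omega)]
  have hfwdE : ∀ j', fwd (fEw M x t) (t : ℕ) (psi0 M x) j'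
      = fwd (fXw M x) (t : ℕ) (psi0 M x) j' :=
    fun j' => fwd_congr _ hfE_agree _ j'
  have hcsE : ∀ (p : ℕ), (t : ℕ) ≤ p → ∀ i,
      csum (fun a b q => fEw M x t a b (q + p)) (N - p) i = 1 := by
    intro p hp i
    refine csum_eq_one _ (fun a' q => ?_) i
    have hrow : ∀ b, fEw M x t a' b (q + p) = M.trans a' b := by
      intro b
      unfold fEw
      rw [dif_neg (by omega), mul_one]
    rw [Finset.sum_congr rfl fun b _ => hrow b]
    exact M.trans_sum a'
  -- values of the various probabilities
  have hQval : M.pr (fun _ y => ∀ r : Fin (N+1), r ≤ t → y r = x r)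
      = ∑ i, fwd (fXw M x) (t : ℕ) (psi0 M x) i := by
    rw [pr_upto_total M x t (t : ℕ) (le_of_lt hmN)]
    refine Finset.sum_congr rfl fun j' _ => ?_
    rw [hcsE (t : ℕ) le_rfl j', mul_one, hfwdE j']
  have hAval : ∀ i, M.pr (fun s y => s t = i ∧ ∀ r : Fin (N+1), r ≤ t → y r = x r)
      = fwd (fXw M x) (t : ℕ) (psi0 M x) i := by
    intro i
    calc M.pr (fun s y => s t = i ∧ ∀ r : Fin (N+1), r ≤ t → y r = x r)
        = fwd (fEw M x t) (t : ℕ) (psi0 M x) i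
            * csum (fun a b q => fEw M x t a b (q + (t : ℕ))) (N - (t : ℕ)) i :=
          pr_pin_upto M x t (t : ℕ) (le_of_lt hmN) i
      _ = fwd (fXw M x) (t : ℕ) (psi0 M x) i := by
          rw [hcsE (t : ℕ) le_rfl i, mul_one, hfwdE i]
  have hBval : ∀ k, M.pr (fun s y => s ⟨(t : ℕ) + 1, Nat.lt_succ_of_le hm1⟩ = k
        ∧ ∀ r : Fin (N+1), r ≤ t → y r = x r)
      = ∑ i, fwd (fXw M x) (t : ℕ) (psi0 M x) i * M.trans i k := by
    intro k
    calc M.pr (fun s y => s ⟨(t : ℕ) + 1, Nat.lt_succ_of_le hm1⟩ = k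
          ∧ ∀ r : Fin (N+1), r ≤ t → y r = x r)
        = fwd (fEw M x t) ((t : ℕ) + 1) (psi0 M x) k
            * csum (fun a b q => fEw M x t a b (q + ((t : ℕ) + 1))) (N - ((t : ℕ) + 1)) k :=
          pr_pin_upto M x t ((t : ℕ) + 1) hm1 k
      _ = (∑ i, fwd (fEw M x t) (t : ℕ) (psi0 M x) i * fEw M x t i k (t : ℕ)) * 1 := by
          rw [fwd_succ, hcsE ((t : ℕ) + 1) (by omega) k]
      _ = ∑ i, fwd (fXw M x) (t : ℕ) (psi0 M x) i * M.trans i k := by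
          rw [mul_one]
          refine Finset.sum_congr rfl fun i _ => ?_
          rw [hfwdE i]
          unfold fEw
          rw [dif_neg (lt_irrefl _), mul_one]
  have hCval : ∀ j', M.pr (fun s y => s t = j' ∧ HMCModel.obsEq x s y)
      = fwd (fXw M x) (t : ℕ) (psi0 M x) j'
          * csum (fun a b q => fXw M x a b (q + (t : ℕ))) (N - (t : ℕ)) j' :=
    fun j' => pr_pin_obs M x (t : ℕ) (le_of_lt hmN) j'
  have hDval : ∀ k, M.pr (fun s y => s ⟨(t : ℕ) + 1, Nat.lt_succ_of_le hm1⟩ = k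
        ∧ HMCModel.obsEq x s y)
      = (∑ i, fwd (fXw M x) (t : ℕ) (psi0 M x) i * M.trans i k)
          * (M.emit k (x ⟨(t : ℕ) + 1, Nat.lt_succ_of_le hm1⟩)
            * csum (fun a b q => fXw M x a b (q + ((t : ℕ) + 1))) (N - ((t : ℕ) + 1)) k) := by
    intro k
    calc M.pr (fun s y => s ⟨(t : ℕ) + 1, Nat.lt_succ_of_le hm1⟩ = k ∧ HMCModel.obsEq x s y)
        = fwd (fXw M x) ((t : ℕ) + 1) (psi0 M x) k
            * csum (fun a b q => fXw M x a b (q + ((t : ℕ) + 1))) (N - ((t : ℕ) + 1)) k :=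
          pr_pin_obs M x ((t : ℕ) + 1) hm1 k
      _ = (∑ i, fwd (fXw M x) (t : ℕ) (psi0 M x) i * fXw M x i k (t : ℕ))
            * csum (fun a b q => fXw M x a b (q + ((t : ℕ) + 1))) (N - ((t : ℕ) + 1)) k := by
          rw [fwd_succ]
      _ = _ := by
          have hstep : ∀ i, fwd (fXw M x) (t : ℕ) (psi0 M x) i * fXw M x i k (t : ℕ)
              = (fwd (fXw M x) (t : ℕ) (psi0 M x) i * M.trans i k)
                  * M.emit k (x ⟨(t : ℕ) + 1, Nat.lt_succ_of_le hm1⟩) := by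
            intro i
            unfold fXw
            rw [dif_pos hmN]
            ring
          rw [Finset.sum_congr rfl fun i _ => hstep i, ← Finset.sum_mul, mul_assoc]
  have hZrec : ∀ j', csum (fun a b q => fXw M x a b (q + (t : ℕ))) (N - (t : ℕ)) j'
      = ∑ k, M.trans j' k * (M.emit k (x ⟨(t : ℕ) + 1, Nat.lt_succ_of_le hm1⟩)
          * csum (fun a b q => fXw M x a b (q + ((t : ℕ) + 1))) (N - ((t : ℕ) + 1)) k) := by
    intro j'
    obtain ⟨d, hd⟩ : ∃ d, N - (t : ℕ) = d + 1 := ⟨N - (t : ℕ) - 1, by omega⟩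
    rw [hd]
    simp only [csum]
    refine Finset.sum_congr rfl fun k _ => ?_
    have h1 : fXw M x j' k (0 + (t : ℕ))
        = M.trans j' k * M.emit k (x ⟨(t : ℕ) + 1, Nat.lt_succ_of_le hm1⟩) := by
      rw [show (0 : ℕ) + (t : ℕ) = (t : ℕ) from by omega]
      unfold fXw
      rw [dif_pos hmN]
    have h2 : csum (fun a b q => fXw M x a b (q + 1 + (t : ℕ))) d k
        = csum (fun a b q => fXw M x a b (q + ((t : ℕ) + 1))) (N - ((t : ℕ) + 1)) k := by
      rw [show N - ((t : ℕ) + 1) = d from by omega]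
      exact csum_congr _ (fun a b q _ => by
        rw [show q + 1 + (t : ℕ) = q + ((t : ℕ) + 1) from by omega]) k
    rw [h1, h2]
    ring
  have hPval : M.pr (HMCModel.obsEq x)
      = ∑ j', fwd (fXw M x) (t : ℕ) (psi0 M x) j'
          * csum (fun a b q => fXw M x a b (q + (t : ℕ))) (N - (t : ℕ)) j' :=
    pr_obs_total M x (t : ℕ) (le_of_lt hmN)
  -- positivity of the conditioning events
  have hQ : 0 < M.pr (fun _ y => ∀ r : Fin (N+1), r ≤ t → y r = x r) := by
    rw [hQval]
    have hle : M.pr (HMCModel.obsEq x) ≤ ∑ i, fwd (fXw M x) (t : ℕ) (psi0 M x) i := by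
      rw [hPval]
      refine Finset.sum_le_sum fun j' _ => ?_
      calc fwd (fXw M x) (t : ℕ) (psi0 M x) j'
            * csum (fun a b q => fXw M x a b (q + (t : ℕ))) (N - (t : ℕ)) j'
          ≤ fwd (fXw M x) (t : ℕ) (psi0 M x) j' * 1 := by
            refine mul_le_mul_of_nonneg_left ?_ (ha_nonneg j')
            exact csum_le_one _ (fun a b q => hfX_nonneg a b (q + (t : ℕ)))
              (fun a q => hfX_row_le a (q + (t : ℕ))) j'
        _ = fwd (fXw M x) (t : ℕ) (psi0 M x) j' := mul_one _
    exact lt_of_lt_of_le hx hle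
  -- unfold the conditional probabilities
  simp only [HMCModel.cpr]
  have hiteP : ∀ z : ℝ, (if 0 < M.pr (HMCModel.obsEq x) then z else (0:ℝ)) = z :=
    fun z => if_pos hx
  have hiteQ : ∀ z : ℝ,
      (if 0 < M.pr (fun _ y => ∀ r : Fin (N+1), r ≤ t → y r = x r) then z else (0:ℝ)) = z :=
    fun z => if_pos hQ
  simp only [hiteP, hiteQ]
  constructor
  · -- part 1 : backward recursion
    simp only [hAval, hBval, hCval, hDval]
    exact final_algebra (M.pr (HMCModel.obsEq x))
      (M.pr (fun _ y => ∀ r : Fin (N+1), r ≤ t → y r = x r)) hx hQ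
      (fun i => fwd (fXw M x) (t : ℕ) (psi0 M x) i)
      (fun j' => csum (fun a b q => fXw M x a b (q + (t : ℕ))) (N - (t : ℕ)) j')
      (fun k => M.emit k (x ⟨(t : ℕ) + 1, Nat.lt_succ_of_le hm1⟩)
        * csum (fun a b q => fXw M x a b (q + ((t : ℕ) + 1))) (N - ((t : ℕ) + 1)) k)
      M.trans ha_nonneg M.trans_nonneg hZrec j
  · -- part 2 : filtering recursion
    intro k
    simp only [hAval, hBval]
    rw [Finset.sum_div]
    refine Finset.sum_congr rfl fun i _ => ?_
    ring
end

section
/- In a hidden Markov chain model, the entropies of partial state sequences given a terminal state satisfy the forward recursion of Hernando et al.: for 2 ≤ t ≤ T−1 and every state j with P(S_t = j, X_0^t = x_0^t) > 0, H(S_0^{t−1} | S_t = j, X_0^t = x_0^t) = Σ_i P(S_{t−1} = i | S_t = j, X_0^{t−1} = x_0^{t−1}) { H(S_0^{t−2} | S_{t−1} = i, X_0^{t−1} = x_0^{t−1}) − log P(S_{t−1} = i | S_t = j, X_0^{t−1} = x_0^{t−1}) }, the sum ranging over the states i with P(S_{t−1} = i | S_t = j, X_0^{t−1} = x_0^{t−1})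 > 0. -/
open HMCModel

open Finset

section Helpers

variable {T : ℕ} [NeZero T]

lemma fin_sub_one_val (r : Fin T) (hr : 1 ≤ r.val) : ((r - 1 : Fin T)).val = r.val - 1 := by
  have hT : 2 ≤ T := by have := r.isLt; omega
  have h1 : ((1 : Fin T)).val = 1 := by
    rw [Fin.val_one']; exact Nat.mod_eq_of_lt (by omega)
  rw [Fin.sub_def]
  show (T - ((1:Fin T)).val + r.val) % T = r.val - 1
  rw [h1]
  calc (T - 1 + r.val) % T = (T + (r.val - 1)) % T := by congr 1; omega
    _ = (r.val - 1) % T := Nat.add_mod_left _ _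
    _ = r.val - 1 := Nat.mod_eq_of_lt (by have := r.isLt; omega)

lemma my_prod_indicator {α : Type*} (s : Finset α) (p : α → Prop) [DecidablePred p] (f : α → ℝ) :
    (∏ i ∈ s, if p i then f i else 0) = if (∀ i ∈ s, p i) then ∏ i ∈ s, f i else 0 := by
  by_cases h : ∀ i ∈ s, p i
  · rw [if_pos h]; exact Finset.prod_congr rfl (fun i hi => if_pos (h i hi))
  · rw [if_neg h]; push_neg at h; obtain ⟨i, hi, hpi⟩ := h
    exact Finset.prod_eq_zero hi (if_neg hpi)

end Helpers

namespace HMCAux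

open HMCModel

variable {J V T : ℕ} [NeZero J] [NeZero T] (M : HMCModel J V T) (x : Fin T → Fin V)

noncomputable def g (s : Fin T → Fin J) : ℝ :=
  M.init (s 0) * ∏ r ∈ Finset.univ.filter (fun r : Fin T => r ≠ 0), M.trans (s (r - 1)) (s r)

noncomputable def u (m : ℕ) (s : Fin T → Fin J) : ℝ :=
  M.init (s 0) *
    ∏ r ∈ Finset.univ.filter (fun r : Fin T => r ≠ 0 ∧ (r : ℕ) < m), M.trans (s (r - 1)) (s r)

open Classical in
noncomputable def eW (c : Fin T → Prop) (s : Fin T → Fin J) : ℝ :=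
  ∏ r, (if c r then M.emit (s r) (x r) else 1)

open Classical in
noncomputable def ind (P : Prop) (v : ℝ) : ℝ := if P then v else 0

lemma ind_pos {P : Prop} (h : P) (v : ℝ) : ind P v = v := if_pos h

lemma ind_neg {P : Prop} (h : ¬ P) (v : ℝ) : ind P v = 0 := if_neg h

lemma ind_nonneg {P : Prop} {v : ℝ} (hv : 0 ≤ v) : 0 ≤ ind P v := by
  by_cases h : P
  · rw [ind_pos h]; exact hv
  · rw [ind_neg h]

lemma g_nonneg (s) : 0 ≤ g M s :=
  mul_nonneg (M.init_nonneg _) (Finset.prod_nonneg fun r _ => M.trans_nonneg _ _)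

lemma u_nonneg (m s) : 0 ≤ u M m s :=
  mul_nonneg (M.init_nonneg _) (Finset.prod_nonneg fun r _ => M.trans_nonneg _ _)

open Classical in
lemma eW_nonneg (c s) : 0 ≤ eW M x c s :=
  Finset.prod_nonneg fun r _ => by
    by_cases h : c r
    · rw [if_pos h]; exact M.emit_nonneg _ _
    · rw [if_neg h]; exact zero_le_one

lemma joint_eq (s : Fin T → Fin J) (y : Fin T → Fin V) :
    M.joint s y = g M s * ∏ r, M.emit (s r) (y r) := by
  unfold HMCModel.joint g
  rw [Finset.prod_mul_distrib]
  rw [show (Finset.univ.filter (fun r : Fin T => r ≠ 0)) = Finset.univ.erase 0 from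
    Finset.filter_ne' _ _]
  rw [← Finset.mul_prod_erase Finset.univ (fun r => M.emit (s r) (y r)) (Finset.mem_univ 0)]
  ring

lemma joint_nonneg (s y) : 0 ≤ M.joint s y := by
  rw [joint_eq]
  exact mul_nonneg (g_nonneg M s) (Finset.prod_nonneg fun r _ => M.emit_nonneg _ _)

open Classical in
lemma sumY (c : Fin T → Prop) (s : Fin T → Fin J) :
    (∑ y : Fin T → Fin V,
      if (∀ r : Fin T, c r → y r = x r) then ∏ r, M.emit (s r) (y r) else 0)
      = eW M x c s := by
  have step1 : ∀ y : Fin T → Fin V,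
      (if (∀ r : Fin T, c r → y r = x r) then ∏ r, M.emit (s r) (y r) else 0)
        = ∏ r, (if c r → y r = x r then M.emit (s r) (y r) else 0) := by
    intro y
    rw [my_prod_indicator]
    simp
  rw [Finset.sum_congr rfl (fun y _ => step1 y)]
  rw [show (Finset.univ : Finset (Fin T → Fin V)) =
    Fintype.piFinset (fun _ : Fin T => (Finset.univ : Finset (Fin V))) from
      (Fintype.piFinset_univ).symm]
  rw [← Finset.prod_univ_sum (fun _ : Fin T => (Finset.univ : Finset (Fin V)))
    (fun r v => if c r → v = x r then M.emit (s r) v else 0)]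
  unfold eW
  apply Finset.prod_congr rfl
  intro r _
  by_cases hc : c r
  · rw [if_pos hc]
    have : ∀ v : Fin V, (if c r → v = x r then M.emit (s r) v else 0)
        = if v = x r then M.emit (s r) v else 0 := by
      intro v; by_cases hv : v = x r
      · rw [if_pos (fun _ => hv), if_pos hv]
      · rw [if_neg (fun h => hv (h hc)), if_neg hv]
    rw [Finset.sum_congr rfl (fun v _ => this v)]
    rw [Finset.sum_ite_eq' Finset.univ (x r) (fun v => M.emit (s r) v)]
    simp
  · rw [if_neg hc]
    have : ∀ v : Fin V, (if c r → v = x r then M.emit (s r) v else 0) = M.emit (s r) v := by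
      intro v; rw [if_pos (fun h => absurd h hc)]
    rw [Finset.sum_congr rfl (fun v _ => this v)]
    exact M.emit_sum _

open Classical in
lemma prY (P : (Fin T → Fin J) → Prop) (c : Fin T → Prop) :
    M.pr (fun s y => P s ∧ ∀ r : Fin T, c r → y r = x r)
      = ∑ s : Fin T → Fin J, ind (P s) (g M s * eW M x c s) := by
  simp only [HMCModel.pr]
  apply Finset.sum_congr rfl
  intro s _
  by_cases hP : P s
  · rw [ind_pos hP, ← sumY M x c s, Finset.mul_sum]
    apply Finset.sum_congr rfl
    intro y _
    by_cases hy : ∀ r : Fin T, c r → y r = x r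
    · rw [if_pos ⟨hP, hy⟩, if_pos hy, joint_eq]
    · rw [if_neg (fun h => hy h.2), if_neg hy, mul_zero]
  · rw [ind_neg hP]
    apply Finset.sum_eq_zero
    intro y _
    rw [if_neg (fun h => hP h.1)]

end HMCAux

namespace HMCAux

open HMCModel

section PrBasic

variable {J V T : ℕ} [NeZero J] [NeZero T] (M : HMCModel J V T)

lemma pr_congr {A B : (Fin T → Fin J) → (Fin T → Fin V) → Prop}
    (h : ∀ s y, A s y ↔ B s y) : M.pr A = M.pr B := by
  simp only [HMCModel.pr]
  apply Finset.sum_congr rfl; intro s _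
  apply Finset.sum_congr rfl; intro y _
  by_cases hA : A s y
  · rw [if_pos hA, if_pos ((h s y).1 hA)]
  · rw [if_neg hA, if_neg (fun hB => hA ((h s y).2 hB))]

lemma pr_nonneg (A : (Fin T → Fin J) → (Fin T → Fin V) → Prop) : 0 ≤ M.pr A := by
  simp only [HMCModel.pr]
  apply Finset.sum_nonneg; intro s _
  apply Finset.sum_nonneg; intro y _
  by_cases h : A s y
  · rw [if_pos h]; exact joint_nonneg M s y
  · rw [if_neg h]

lemma pr_mono {A B : (Fin T → Fin J) → (Fin T → Fin V) → Prop}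
    (h : ∀ s y, A s y → B s y) : M.pr A ≤ M.pr B := by
  simp only [HMCModel.pr]
  apply Finset.sum_le_sum; intro s _
  apply Finset.sum_le_sum; intro y _
  by_cases hA : A s y
  · rw [if_pos hA, if_pos (h s y hA)]
  · rw [if_neg hA]
    by_cases hB : B s y
    · rw [if_pos hB]; exact joint_nonneg M s y
    · rw [if_neg hB]

lemma pr_empty {A : (Fin T → Fin J) → (Fin T → Fin V) → Prop}
    (h : ∀ s y, ¬ A s y) : M.pr A = 0 := by
  simp only [HMCModel.pr]
  apply Finset.sum_eq_zero; intro s _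
  apply Finset.sum_eq_zero; intro y _
  rw [if_neg (h s y)]

lemma cpr_nonneg (A B : (Fin T → Fin J) → (Fin T → Fin V) → Prop) : 0 ≤ M.cpr A B := by
  unfold HMCModel.cpr
  by_cases h : 0 < M.pr B
  · rw [if_pos h]; exact div_nonneg (pr_nonneg M _) (le_of_lt h)
  · rw [if_neg h]

lemma sum_pr_fiber {α : Type*} [Fintype α] (f : (Fin T → Fin J) → α)
    (E : (Fin T → Fin J) → (Fin T → Fin V) → Prop) :
    ∑ a : α, M.pr (fun s y => f s = a ∧ E s y) = M.pr E := by
  classical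
  simp only [HMCModel.pr]
  rw [Finset.sum_comm]
  apply Finset.sum_congr rfl; intro s _
  rw [Finset.sum_comm]
  apply Finset.sum_congr rfl; intro y _
  by_cases hE : E s y
  · rw [if_pos hE]
    conv_rhs => rw [show M.joint s y = ∑ a : α, if f s = a then M.joint s y else 0 from by
      rw [Finset.sum_ite_eq Finset.univ (f s) (fun _ => M.joint s y),
        if_pos (Finset.mem_univ _)]]
    apply Finset.sum_congr rfl; intro a _
    by_cases ha : f s = a
    · rw [if_pos (show f s = a ∧ E s y from ⟨ha, hE⟩), if_pos ha]
    · rw [if_neg (fun h => ha h.1), if_neg ha]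
  · rw [if_neg hE]
    apply Finset.sum_eq_zero; intro a _
    rw [if_neg (fun h => hE h.2)]

lemma sum_cpr {α : Type*} [Fintype α] (f : (Fin T → Fin J) → α)
    (E : (Fin T → Fin J) → (Fin T → Fin V) → Prop) (hE : 0 < M.pr E) :
    ∑ a : α, M.cpr (fun s _ => f s = a) E = 1 := by
  unfold HMCModel.cpr
  calc (∑ a : α, if 0 < M.pr E then M.pr (fun s y => f s = a ∧ E s y) / M.pr E else 0)
      = ∑ a : α, M.pr (fun s y => f s = a ∧ E s y) / M.pr E :=
        Finset.sum_congr rfl fun a _ => if_pos hE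
    _ = (∑ a : α, M.pr (fun s y => f s = a ∧ E s y)) / M.pr E := by rw [Finset.sum_div]
    _ = M.pr E / M.pr E := by rw [sum_pr_fiber]
    _ = 1 := div_self (ne_of_gt hE)

end PrBasic

section Collapse

variable {J T : ℕ} [NeZero J] [NeZero T]

noncomputable def eswap (c : Fin T) (v : Fin J) : (Fin T → Fin J) ≃ (Fin T → Fin J) :=
  Equiv.piCongrRight (fun r => if r = c then Equiv.swap v 0 else Equiv.refl _)

lemma eswap_eq_update (c : Fin T) (v : Fin J) (s : Fin T → Fin J) :
    eswap c v s = Function.update s c (Equiv.swap v 0 (s c)) := by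
  funext r
  by_cases h : r = c
  · subst h
    simp [eswap, Equiv.piCongrRight, Function.update_self]
  · simp [eswap, Equiv.piCongrRight, h, Function.update_of_ne h]

lemma eswap_apply_self (c : Fin T) (v : Fin J) (s : Fin T → Fin J) :
    eswap c v s c = Equiv.swap v 0 (s c) := by
  rw [eswap_eq_update, Function.update_self]

lemma CC1 (G : (Fin T → Fin J) → ℝ) (c : Fin T)
    (hG : ∀ s v, G (Function.update s c v) = G s) (v : Fin J) :
    (∑ s : Fin T → Fin J, if s c = v then G s else 0)
      = ∑ s : Fin T → Fin J, if s c = 0 then G s else 0 := by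
  classical
  apply Fintype.sum_equiv (eswap c v)
  intro s
  have h2 : G (eswap c v s) = G s := by rw [eswap_eq_update]; exact hG _ _
  have h1 : eswap c v s c = Equiv.swap v 0 (s c) := eswap_apply_self c v s
  rw [h2, h1]
  have hiff : Equiv.swap v 0 (s c) = 0 ↔ s c = v := by
    rw [Equiv.apply_eq_iff_eq_symm_apply, Equiv.symm_swap, Equiv.swap_apply_right]
  exact if_congr hiff.symm rfl rfl

lemma sum_eq_card_mul (G : (Fin T → Fin J) → ℝ) (c : Fin T)
    (hG : ∀ s v, G (Function.update s c v) = G s) :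
    ∑ s : Fin T → Fin J, G s
      = (J : ℝ) * ∑ s : Fin T → Fin J, if s c = 0 then G s else 0 := by
  classical
  have h0 : ∀ s : Fin T → Fin J, G s = ∑ v : Fin J, if s c = v then G s else 0 := by
    intro s
    rw [Finset.sum_ite_eq Finset.univ (s c) (fun _ => G s), if_pos (Finset.mem_univ _)]
  calc ∑ s : Fin T → Fin J, G s
      = ∑ s : Fin T → Fin J, ∑ v : Fin J, if s c = v then G s else 0 :=
        Finset.sum_congr rfl fun s _ => h0 s
    _ = ∑ v : Fin J, ∑ s : Fin T → Fin J, if s c = v then G s else 0 := Finset.sum_comm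
    _ = ∑ _v : Fin J, ∑ s : Fin T → Fin J, if s c = 0 then G s else 0 :=
        Finset.sum_congr rfl fun v _ => CC1 G c hG v
    _ = (J : ℝ) * ∑ s : Fin T → Fin J, if s c = 0 then G s else 0 := by
        rw [Finset.sum_const, Finset.card_univ, Fintype.card_fin, nsmul_eq_mul]

lemma CC2 (G : (Fin T → Fin J) → ℝ) (c : Fin T)
    (hG : ∀ s v, G (Function.update s c v) = G s)
    (φ : (Fin T → Fin J) → Fin J → ℝ)
    (hφi : ∀ s v w, φ (Function.update s c v) w = φ s w)
    (hφ1 : ∀ s, ∑ v : Fin J, φ s v = 1) :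
    ∑ s : Fin T → Fin J, G s * φ s (s c)
      = ∑ s : Fin T → Fin J, if s c = 0 then G s else 0 := by
  classical
  have h0 : ∀ s : Fin T → Fin J, G s * φ s (s c)
      = ∑ v : Fin J, if s c = v then G s * φ s v else 0 := by
    intro s
    rw [Finset.sum_ite_eq Finset.univ (s c) (fun v => G s * φ s v), if_pos (Finset.mem_univ _)]
  calc ∑ s : Fin T → Fin J, G s * φ s (s c)
      = ∑ s : Fin T → Fin J, ∑ v : Fin J, if s c = v then G s * φ s v else 0 :=
        Finset.sum_congr rfl fun s _ => h0 s
    _ = ∑ v : Fin J, ∑ s : Fin T → Fin J, if s c = v then G s * φ s v else 0 := Finset.sum_comm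
    _ = ∑ v : Fin J, ∑ s : Fin T → Fin J, if s c = 0 then G s * φ s v else 0 :=
        Finset.sum_congr rfl fun v _ =>
          CC1 (fun s => G s * φ s v) c (fun s w => by
            show G (Function.update s c w) * φ (Function.update s c w) v = G s * φ s v
            rw [hG, hφi]) v
    _ = ∑ s : Fin T → Fin J, ∑ v : Fin J, if s c = 0 then G s * φ s v else 0 := Finset.sum_comm
    _ = ∑ s : Fin T → Fin J, if s c = 0 then G s else 0 := by
        apply Finset.sum_congr rfl; intro s _
        by_cases h : s c = 0
        · calc (∑ v : Fin J, if s c = 0 then G s * φ s v else 0)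
              = ∑ v : Fin J, G s * φ s v := Finset.sum_congr rfl fun v _ => if_pos h
            _ = G s * ∑ v : Fin J, φ s v := by rw [Finset.mul_sum]
            _ = G s := by rw [hφ1, mul_one]
            _ = if s c = 0 then G s else 0 := (if_pos h).symm
        · rw [if_neg h]
          exact Finset.sum_eq_zero fun v _ => if_neg h
end Collapse

end HMCAux

namespace HMCAux

open HMCModel

section Chain

variable {J V T : ℕ} [NeZero J] [NeZero T] (M : HMCModel J V T) (x : Fin T → Fin V)

lemma fin_val_zero : ((0 : Fin T)).val = 0 := by simp

lemma u_update (m : ℕ) (hm : 1 ≤ m) (s : Fin T → Fin J) (r : Fin T) (v : Fin J)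
    (hr : m ≤ r.val) : u M m (Function.update s r v) = u M m s := by
  unfold u
  have hr0 : (0 : Fin T) ≠ r := by
    intro he
    have : r.val = 0 := by rw [← he]; exact fin_val_zero
    omega
  congr 1
  · rw [Function.update_of_ne hr0]
  · apply Finset.prod_congr rfl; intro r' hr'
    simp only [Finset.mem_filter, Finset.mem_univ, true_and] at hr'
    obtain ⟨hne, hlt⟩ := hr'
    have hr'1 : 1 ≤ r'.val := by
      rcases Nat.eq_zero_or_pos r'.val with h | h
      · exact absurd (Fin.ext (by rw [h, fin_val_zero])) hne
      · exact h
    have e1 : r' ≠ r := by intro he; subst he; omega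
    have e2 : r' - 1 ≠ r := by
      have hs := fin_sub_one_val r' hr'1
      intro he; rw [he] at hs; omega
    rw [Function.update_of_ne e1, Function.update_of_ne e2]

open Classical in
lemma eW_update (c : Fin T → Prop) (s : Fin T → Fin J) (r : Fin T) (v : Fin J)
    (hc : ¬ c r) : eW M x c (Function.update s r v) = eW M x c s := by
  unfold eW
  apply Finset.prod_congr rfl; intro r' _
  by_cases h : r' = r
  · subst h; rw [if_neg hc, if_neg hc]
  · rw [Function.update_of_ne h]

lemma u_succ (mm : Fin T) (hm : 1 ≤ mm.val) (s : Fin T → Fin J) :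
    u M (mm.val + 1) s = u M mm.val s * M.trans (s (mm - 1)) (s mm) := by
  unfold u
  have hset : Finset.univ.filter (fun r : Fin T => r ≠ 0 ∧ (r : ℕ) < mm.val + 1)
      = insert mm (Finset.univ.filter (fun r : Fin T => r ≠ 0 ∧ (r : ℕ) < mm.val)) := by
    ext r
    simp only [Finset.mem_filter, Finset.mem_univ, true_and, Finset.mem_insert]
    constructor
    · rintro ⟨h0, hlt⟩
      by_cases h : r.val = mm.val
      · exact Or.inl (Fin.ext h)
      · exact Or.inr ⟨h0, by omega⟩
    · rintro (rfl | ⟨h0, hlt⟩)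
      · refine ⟨?_, by omega⟩
        intro he
        have : r.val = 0 := by rw [he]; exact fin_val_zero
        omega
      · exact ⟨h0, by omega⟩
  rw [hset, Finset.prod_insert (by
    simp only [Finset.mem_filter, Finset.mem_univ, true_and, not_and]
    intro _; omega)]
  ring

lemma chain : ∀ (d m : ℕ), 1 ≤ m → m + d = T →
    ∀ F : (Fin T → Fin J) → ℝ,
      (∀ (s : Fin T → Fin J) (r : Fin T) (v : Fin J), m ≤ r.val →
        F (Function.update s r v) = F s) →
    ∑ s : Fin T → Fin J, F s * u M m s
      = (J : ℝ) ^ d * ∑ s : Fin T → Fin J, F s * g M s := by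
  intro d
  induction d with
  | zero =>
    intro m hm hmT F _
    have hu : ∀ s, u M m s = g M s := by
      intro s
      unfold u g
      congr 1
      apply Finset.prod_congr _ (fun _ _ => rfl)
      apply Finset.filter_congr
      intro r _
      have := r.isLt
      constructor
      · rintro ⟨h0, _⟩; exact h0
      · intro h0; exact ⟨h0, by omega⟩
    rw [Finset.sum_congr rfl fun s _ => by rw [hu s]]
    rw [pow_zero, one_mul]
  | succ d ih =>
    intro m hm hmT F hF
    have hmT' : m < T := by omega
    set mm : Fin T := ⟨m, hmT'⟩ with hmm
    have hmmv : mm.val = m := rfl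
    have hGind : ∀ (s : Fin T → Fin J) (v : Fin J),
        F (Function.update s mm v) * u M m (Function.update s mm v) = F s * u M m s := by
      intro s v
      rw [hF s mm v (le_of_eq hmmv.symm), u_update M m hm s mm v (le_of_eq hmmv.symm)]
    have hstep : ∑ s : Fin T → Fin J, F s * u M m s
        = (J : ℝ) * ∑ s : Fin T → Fin J, F s * u M (m + 1) s := by
      have h1 := sum_eq_card_mul (fun s => F s * u M m s) mm hGind
      have h2 := CC2 (fun s => F s * u M m s) mm hGind
        (fun s w => M.trans (s (mm - 1)) w)
        (fun s v w => by
          show M.trans ((Function.update s mm v) (mm - 1)) w = M.trans (s (mm - 1)) w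
          rw [Function.update_of_ne (by
            intro he
            have hs := fin_sub_one_val mm (by omega)
            rw [he] at hs; omega)])
        (fun s => M.trans_sum _)
      have h3 : ∀ s : Fin T → Fin J, F s * u M (m + 1) s
          = F s * u M m s * M.trans (s (mm - 1)) (s mm) := by
        intro s
        have := u_succ M mm (by omega) s
        rw [hmmv] at this
        rw [this]; ring
      rw [Finset.sum_congr rfl fun s _ => h3 s, h2, ← h1]
    rw [hstep, ih (m + 1) (by omega) (by omega) F
      (fun s r v hr => hF s r v (by omega))]
    rw [pow_succ]
    ring

end Chain

end HMCAux

namespace HMCAux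

open HMCModel

section Main

variable {J V T : ℕ} [NeZero J] [NeZero T] (M : HMCModel J V T) (x : Fin T → Fin V)

open Classical in
lemma eW_le_eq (t : Fin T) (s : Fin T → Fin J) :
    eW M x (fun r => r ≤ t) s = eW M x (fun r => r < t) s * M.emit (s t) (x t) := by
  unfold eW
  beta_reduce
  conv_lhs => rw [← Finset.mul_prod_erase Finset.univ _ (Finset.mem_univ t)]
  conv_rhs => rw [← Finset.mul_prod_erase Finset.univ _ (Finset.mem_univ t)]
  rw [if_pos (le_refl t), if_neg (lt_irrefl t), one_mul, mul_comm]
  congr 1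
  apply Finset.prod_congr rfl
  intro r hr
  have hne : r ≠ t := Finset.ne_of_mem_erase hr
  by_cases h : r < t
  · rw [if_pos (le_of_lt h), if_pos h]
  · rw [if_neg (fun hle => h (lt_of_le_of_ne hle hne)), if_neg h]

lemma prF1 (t : Fin T) (j : Fin J) (P : (Fin T → Fin J) → Prop)
    (hP : ∀ s, P s → s t = j) :
    M.pr (fun s y => P s ∧ ∀ r : Fin T, r ≤ t → y r = x r)
      = M.emit j (x t) * M.pr (fun s y => P s ∧ ∀ r : Fin T, r < t → y r = x r) := by
  rw [prY M x P (fun r => r ≤ t), prY M x P (fun r => r < t), Finset.mul_sum]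
  apply Finset.sum_congr rfl; intro s _
  by_cases hPs : P s
  · rw [ind_pos hPs, ind_pos hPs, eW_le_eq M x t s, hP s hPs]; ring
  · rw [ind_neg hPs, ind_neg hPs, mul_zero]

lemma prF2 (t : Fin T) (ht : 2 ≤ t.val) (j i : Fin J)
    (A : (Fin T → Fin J) → Prop)
    (hAind : ∀ (s : Fin T → Fin J) (r : Fin T) (v : Fin J), (t : ℕ) ≤ r.val →
      (A (Function.update s r v) ↔ A s))
    (hAi : ∀ s, A s → s (t - 1) = i) :
    M.pr (fun s y => (A s ∧ s t = j) ∧ ∀ r : Fin T, r < t → y r = x r)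
      = M.trans i j * M.pr (fun s y => A s ∧ ∀ r : Fin T, r < t → y r = x r) := by
  rw [prY M x (fun s => A s ∧ s t = j) (fun r => r < t), prY M x A (fun r => r < t)]
  have htv1 : 1 ≤ t.val := by omega
  have hct : ¬ ((t : Fin T) < t) := lt_irrefl t
  set G : (Fin T → Fin J) → ℝ :=
    fun s => ind (A s) (eW M x (fun r => r < t) s * u M t.val s) with hG
  have hGind : ∀ s v, G (Function.update s t v) = G s := by
    intro s v
    simp only [hG]
    by_cases hA : A s
    · rw [ind_pos ((hAind s t v le_rfl).2 hA), ind_pos hA,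
        eW_update M x (fun r => r < t) s t v hct, u_update M t.val (by omega) s t v le_rfl]
    · rw [ind_neg (fun h => hA ((hAind s t v le_rfl).1 h)), ind_neg hA]
  have hd : (t.val + 1) + (T - (t.val + 1)) = T := by have := t.isLt; omega
  have hchain1 := chain M (T - (t.val + 1)) (t.val + 1) (by omega) hd
    (fun s => ind (A s ∧ s t = j) (eW M x (fun r => r < t) s))
    (fun s r v hr => by
      have hrt : r ≠ t := by intro he; subst he; omega
      by_cases hA : A s ∧ s t = j
      · rw [ind_pos, ind_pos hA, eW_update M x (fun r => r < t) s r v (by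
          intro hlt; rw [Fin.lt_def] at hlt; omega)]
        exact ⟨(hAind s r v (by omega)).2 hA.1,
          by rw [Function.update_of_ne (Ne.symm hrt)]; exact hA.2⟩
      · rw [ind_neg, ind_neg hA]
        intro hcon
        exact hA ⟨(hAind s r v (by omega)).1 hcon.1,
          by rw [← hcon.2, Function.update_of_ne (Ne.symm hrt)]⟩)
  have hchain2 := chain M (T - (t.val + 1)) (t.val + 1) (by omega) hd
    (fun s => ind (A s) (eW M x (fun r => r < t) s))
    (fun s r v hr => by
      have hrt : ¬ (r < t) := by rw [Fin.lt_def]; omega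
      by_cases hA : A s
      · rw [ind_pos ((hAind s r v (by omega)).2 hA), ind_pos hA,
          eW_update M x (fun r => r < t) s r v hrt]
      · rw [ind_neg (fun h => hA ((hAind s r v (by omega)).1 h)), ind_neg hA])
  have husucc : ∀ s : Fin T → Fin J,
      u M (t.val + 1) s = u M t.val s * M.trans (s (t - 1)) (s t) := u_succ M t htv1
  have hL : ∑ s : Fin T → Fin J,
      ind (A s ∧ s t = j) (eW M x (fun r => r < t) s) * u M (t.val + 1) s
      = M.trans i j * ∑ s : Fin T → Fin J, (if s t = 0 then G s else 0) := by
    rw [← CC1 G t hGind j, Finset.mul_sum]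
    apply Finset.sum_congr rfl; intro s _
    simp only [hG]
    by_cases hA : A s
    · by_cases hj : s t = j
      · rw [ind_pos ⟨hA, hj⟩, if_pos hj, ind_pos hA, husucc s, hAi s hA, hj]; ring
      · rw [ind_neg (fun h => hj h.2), if_neg hj, zero_mul, mul_zero]
    · by_cases hj : s t = j
      · rw [ind_neg (fun h => hA h.1), if_pos hj, ind_neg hA, zero_mul, mul_zero]
      · rw [ind_neg (fun h => hA h.1), if_neg hj, zero_mul, mul_zero]
  have hR : ∑ s : Fin T → Fin J,
      ind (A s) (eW M x (fun r => r < t) s) * u M (t.val + 1) s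
      = ∑ s : Fin T → Fin J, (if s t = 0 then G s else 0) := by
    rw [← CC2 G t hGind (fun _ w => M.trans i w) (fun _ _ _ => rfl) (fun _ => M.trans_sum i)]
    apply Finset.sum_congr rfl; intro s _
    simp only [hG]
    by_cases hA : A s
    · rw [ind_pos hA, ind_pos hA, husucc s, hAi s hA]; ring
    · rw [ind_neg hA, ind_neg hA, zero_mul, zero_mul]
  have hJpos : (0:ℝ) < (J:ℝ) ^ (T - (t.val + 1)) := by
    apply pow_pos
    exact_mod_cast Nat.pos_of_ne_zero (NeZero.ne J)
  apply mul_left_cancel₀ (ne_of_gt hJpos)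
  have br1 : ∑ s : Fin T → Fin J, ind (A s ∧ s t = j) (g M s * eW M x (fun r => r < t) s)
      = ∑ s : Fin T → Fin J,
        ind (A s ∧ s t = j) (eW M x (fun r => r < t) s) * g M s := by
    apply Finset.sum_congr rfl; intro s _
    by_cases hA : A s ∧ s t = j
    · rw [ind_pos hA, ind_pos hA]; ring
    · rw [ind_neg hA, ind_neg hA, zero_mul]
  have br2 : ∑ s : Fin T → Fin J, ind (A s) (g M s * eW M x (fun r => r < t) s)
      = ∑ s : Fin T → Fin J, ind (A s) (eW M x (fun r => r < t) s) * g M s := by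
    apply Finset.sum_congr rfl; intro s _
    by_cases hA : A s
    · rw [ind_pos hA, ind_pos hA]; ring
    · rw [ind_neg hA, ind_neg hA, zero_mul]
  rw [br1, br2, ← hchain1, ← mul_assoc,
    mul_comm ((J:ℝ) ^ (T - (t.val + 1))) (M.trans i j), mul_assoc, ← hchain2, hL, hR]

end Main

end HMCAux

namespace HMCAux

open HMCModel

section Pref

variable {J V T : ℕ} [NeZero J] [NeZero T] (M : HMCModel J V T)

lemma cpr_congr_left {A A' B : (Fin T → Fin J) → (Fin T → Fin V) → Prop}
    (h : ∀ s y, A s y ↔ A' s y) : M.cpr A B = M.cpr A' B := by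
  unfold HMCModel.cpr
  by_cases hB : 0 < M.pr B
  · rw [if_pos hB, if_pos hB, pr_congr M (fun s y => and_congr_left' (h s y))]
  · rw [if_neg hB, if_neg hB]

lemma prefixVar_idem (k : ℕ) (s : Fin T → Fin J) :
    prefixVar k (prefixVar k s) = prefixVar k s := by
  funext r
  simp only [prefixVar]
  by_cases h : (r : ℕ) < k
  · rw [if_pos h, if_pos h]
  · rw [if_neg h, if_neg h]

lemma prefixVar_update (k : ℕ) (s : Fin T → Fin J) (r : Fin T) (v : Fin J)
    (hr : k ≤ r.val) : prefixVar k (Function.update s r v) = prefixVar k s := by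
  funext r'
  simp only [prefixVar]
  by_cases h : (r' : ℕ) < k
  · rw [if_pos h, if_pos h, Function.update_of_ne (by intro he; subst he; omega)]
  · rw [if_neg h, if_neg h]

end Pref

end HMCAux

open HMCAux

/-- In a hidden Markov chain model, the entropies of partial state
sequences given a terminal state satisfy the forward recursion of Hernando et al.:
for `2 ≤ t ≤ T-1` and every state `j` with `P(S_t = j, X_0^t = x_0^t) > 0`,
`H(S_0^{t-1} | S_t = j, X_0^t = x_0^t)
   = ∑_i P(S_{t-1} = i | S_t = j, X_0^{t-1} = x_0^{t-1})
       { H(S_0^{t-2} | S_{t-1} = i, X_0^{t-1} = x_0^{t-1})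
         − log P(S_{t-1} = i | S_t = j, X_0^{t-1} = x_0^{t-1}) }`,
the sum ranging over the states `i` with positive conditional probability. -/
theorem hmc_hernando_forward_recursion
    {J V T : ℕ} [NeZero J] [NeZero T] (M : HMCModel J V T)
    (x : Fin T → Fin V) (t : Fin T) (ht : 2 ≤ (t : ℕ)) (j : Fin J)
    (hpos : 0 < M.pr (fun s y => s t = j ∧ ∀ r : Fin T, r ≤ t → y r = x r))
    (q : Fin J → ℝ)
    (hq : ∀ i, q i = M.cpr (fun s _ => s (t - 1) = i)
        (fun s y => s t = j ∧ ∀ r : Fin T, r < t → y r = x r)) :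
    M.condEnt (prefixVar (t : ℕ))
        (fun s y => s t = j ∧ ∀ r : Fin T, r ≤ t → y r = x r)
      = ∑ i ∈ Finset.univ.filter (fun i : Fin J => 0 < q i),
          q i * (M.condEnt (prefixVar ((t : ℕ) - 1))
                    (fun s y => s (t - 1) = i ∧ ∀ r : Fin T, r < t → y r = x r)
                 - Real.log (q i)) := by
  classical
  have htT : (t : ℕ) < T := t.isLt
  have ht'v : ((t - 1 : Fin T) : ℕ) = (t : ℕ) - 1 := fin_sub_one_val t (by omega)
  -- basic positivity
  have h1 : M.pr (fun s y => s t = j ∧ ∀ r : Fin T, r ≤ t → y r = x r)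
      = M.emit j (x t) * M.pr (fun s y => s t = j ∧ ∀ r : Fin T, r < t → y r = x r) :=
    prF1 M x t j (fun s => s t = j) (fun _ h => h)
  have hprod : 0 < M.emit j (x t)
      * M.pr (fun s y => s t = j ∧ ∀ r : Fin T, r < t → y r = x r) := h1 ▸ hpos
  have hemit_pos : 0 < M.emit j (x t) := by
    rcases (M.emit_nonneg j (x t)).lt_or_eq with h | h
    · exact h
    · rw [← h, zero_mul] at hprod; exact absurd hprod (lt_irrefl 0)
  have hlt_pos : 0 < M.pr (fun s y => s t = j ∧ ∀ r : Fin T, r < t → y r = x r) := by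
    rcases (pr_nonneg M (fun s y => s t = j ∧ ∀ r : Fin T, r < t → y r = x r)).lt_or_eq
      with h | h
    · exact h
    · rw [← h, mul_zero] at hprod; exact absurd hprod (lt_irrefl 0)
  -- step 1: replace conditioning event by the one without x_t
  have hPa : ∀ a : Fin T → Fin J,
      M.cpr (fun s _ => prefixVar (t : ℕ) s = a)
          (fun s y => s t = j ∧ ∀ r : Fin T, r ≤ t → y r = x r)
        = M.cpr (fun s _ => prefixVar (t : ℕ) s = a)
          (fun s y => s t = j ∧ ∀ r : Fin T, r < t → y r = x r) := by
    intro a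
    have key := prF1 M x t j (fun s => prefixVar (t : ℕ) s = a ∧ s t = j) (fun _ h => h.2)
    simp only [HMCModel.cpr, if_pos hpos, if_pos hlt_pos]
    rw [pr_congr M (show ∀ s y, (prefixVar (t : ℕ) s = a ∧ (s t = j ∧ ∀ r : Fin T, r ≤ t → y r = x r))
        ↔ ((prefixVar (t : ℕ) s = a ∧ s t = j) ∧ ∀ r : Fin T, r ≤ t → y r = x r)
        from fun s y => by tauto)]
    rw [pr_congr M (show ∀ s y, (prefixVar (t : ℕ) s = a ∧ (s t = j ∧ ∀ r : Fin T, r < t → y r = x r))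
        ↔ ((prefixVar (t : ℕ) s = a ∧ s t = j) ∧ ∀ r : Fin T, r < t → y r = x r)
        from fun s y => by tauto)]
    rw [key, h1, mul_div_mul_left _ _ (ne_of_gt hemit_pos)]
  have hLHS : M.condEnt (prefixVar (t : ℕ))
        (fun s y => s t = j ∧ ∀ r : Fin T, r ≤ t → y r = x r)
      = M.condEnt (prefixVar (t : ℕ))
        (fun s y => s t = j ∧ ∀ r : Fin T, r < t → y r = x r) := by
    simp only [HMCModel.condEnt]
    congr 1
    apply Finset.sum_congr rfl
    intro a _
    rw [hPa a]
  -- q is nonnegative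
  have hqnn : ∀ i, 0 ≤ q i := fun i => by rw [hq i]; exact cpr_nonneg M _ _
  -- Markov identity for q
  have hq2 : ∀ i, q i
        * M.pr (fun s y => s t = j ∧ ∀ r : Fin T, r < t → y r = x r)
      = M.trans i j * M.pr (fun s y => s (t - 1) = i ∧ ∀ r : Fin T, r < t → y r = x r) := by
    intro i
    rw [hq i]
    simp only [HMCModel.cpr, if_pos hlt_pos]
    rw [div_mul_cancel₀ _ (ne_of_gt hlt_pos)]
    rw [pr_congr M (show ∀ s y, (s (t - 1) = i ∧ (s t = j ∧ ∀ r : Fin T, r < t → y r = x r))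
        ↔ ((s (t - 1) = i ∧ s t = j) ∧ ∀ r : Fin T, r < t → y r = x r)
        from fun s y => by tauto)]
    exact prF2 M x t ht j i (fun s => s (t - 1) = i)
      (fun s r v hr => by
        have hne : t - 1 ≠ r := by
          intro he
          have : ((t - 1 : Fin T) : ℕ) = r.val := by rw [he]
          omega
        beta_reduce
        rw [Function.update_of_ne hne])
      (fun _ h => h)
  -- Markov identity for the pair probabilities
  have hP2 : ∀ (i : Fin J) (b : Fin T → Fin J),
      M.cpr (fun s _ => prefixVar ((t : ℕ) - 1) s = b ∧ s (t - 1) = i)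
          (fun s y => s t = j ∧ ∀ r : Fin T, r < t → y r = x r)
        * M.pr (fun s y => s t = j ∧ ∀ r : Fin T, r < t → y r = x r)
      = M.trans i j
        * M.pr (fun s y => (prefixVar ((t : ℕ) - 1) s = b ∧ s (t - 1) = i)
            ∧ ∀ r : Fin T, r < t → y r = x r) := by
    intro i b
    simp only [HMCModel.cpr, if_pos hlt_pos]
    rw [div_mul_cancel₀ _ (ne_of_gt hlt_pos)]
    rw [pr_congr M (show ∀ s y,
        ((prefixVar ((t : ℕ) - 1) s = b ∧ s (t - 1) = i) ∧ (s t = j ∧ ∀ r : Fin T, r < t → y r = x r))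
        ↔ (((prefixVar ((t : ℕ) - 1) s = b ∧ s (t - 1) = i) ∧ s t = j) ∧ ∀ r : Fin T, r < t → y r = x r)
        from fun s y => by tauto)]
    exact prF2 M x t ht j i (fun s => prefixVar ((t : ℕ) - 1) s = b ∧ s (t - 1) = i)
      (fun s r v hr => by
        have hne : t - 1 ≠ r := by
          intro he
          have : ((t - 1 : Fin T) : ℕ) = r.val := by rw [he]
          omega
        beta_reduce
        rw [prefixVar_update ((t : ℕ) - 1) s r v (by omega), Function.update_of_ne hne])
      (fun _ h => h.2)
  -- splitting of the prefix event
  have hsplit : ∀ a : Fin T → Fin J, prefixVar (t : ℕ) a = a → ∀ s : Fin T → Fin J,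
      (prefixVar (t : ℕ) s = a
        ↔ (prefixVar ((t : ℕ) - 1) s = prefixVar ((t : ℕ) - 1) a ∧ s (t - 1) = a (t - 1))) := by
    intro a ha s
    constructor
    · intro h
      refine ⟨?_, ?_⟩
      · funext r
        simp only [prefixVar]
        by_cases hr : (r : ℕ) < (t : ℕ) - 1
        · rw [if_pos hr, if_pos hr]
          have hc := congrFun h r
          simp only [prefixVar] at hc
          rw [if_pos (show (r : ℕ) < (t : ℕ) by omega)] at hc
          exact hc
        · rw [if_neg hr, if_neg hr]
      · have hc := congrFun h (t - 1)
        simp only [prefixVar] at hc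
        rw [if_pos (show ((t - 1 : Fin T) : ℕ) < (t : ℕ) by omega)] at hc
        exact hc
    · rintro ⟨h1', h2'⟩
      funext r
      simp only [prefixVar]
      by_cases hr : (r : ℕ) < (t : ℕ)
      · rw [if_pos hr]
        by_cases hr' : (r : ℕ) < (t : ℕ) - 1
        · have hc := congrFun h1' r
          simp only [prefixVar] at hc
          rw [if_pos hr', if_pos hr'] at hc
          exact hc
        · have : r = t - 1 := Fin.ext (by omega)
          rw [this]
          exact h2'
      · rw [if_neg hr]
        have hc := congrFun ha r
        simp only [prefixVar] at hc
        rw [if_neg hr] at hc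
        exact hc
  -- reindexing the entropy sum
  have hreindex :
      ∑ a : Fin T → Fin J,
        (M.cpr (fun s _ => prefixVar (t : ℕ) s = a)
            (fun s y => s t = j ∧ ∀ r : Fin T, r < t → y r = x r))
        * Real.log (M.cpr (fun s _ => prefixVar (t : ℕ) s = a)
            (fun s y => s t = j ∧ ∀ r : Fin T, r < t → y r = x r))
      = ∑ i : Fin J, ∑ b : Fin T → Fin J,
        (M.cpr (fun s _ => prefixVar ((t : ℕ) - 1) s = b ∧ s (t - 1) = i)
            (fun s y => s t = j ∧ ∀ r : Fin T, r < t → y r = x r))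
        * Real.log (M.cpr (fun s _ => prefixVar ((t : ℕ) - 1) s = b ∧ s (t - 1) = i)
            (fun s y => s t = j ∧ ∀ r : Fin T, r < t → y r = x r)) := by
    have hpz : ∀ a : Fin T → Fin J, ¬ (prefixVar (t : ℕ) a = a) →
        M.cpr (fun s _ => prefixVar (t : ℕ) s = a)
          (fun s y => s t = j ∧ ∀ r : Fin T, r < t → y r = x r) = 0 := by
      intro a ha
      simp only [HMCModel.cpr, if_pos hlt_pos]
      rw [pr_empty M (fun s y hcon =>
        ha (by rw [← hcon.1]; exact prefixVar_idem _ _)), zero_div]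
    have hpbz : ∀ (i : Fin J) (b : Fin T → Fin J), ¬ (prefixVar ((t : ℕ) - 1) b = b) →
        M.cpr (fun s _ => prefixVar ((t : ℕ) - 1) s = b ∧ s (t - 1) = i)
          (fun s y => s t = j ∧ ∀ r : Fin T, r < t → y r = x r) = 0 := by
      intro i b hb
      simp only [HMCModel.cpr, if_pos hlt_pos]
      rw [pr_empty M (fun s y hcon =>
        hb (by rw [← hcon.1.1]; exact prefixVar_idem _ _)), zero_div]
    calc ∑ a : Fin T → Fin J,
          (M.cpr (fun s _ => prefixVar (t : ℕ) s = a)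
              (fun s y => s t = j ∧ ∀ r : Fin T, r < t → y r = x r))
            * Real.log (M.cpr (fun s _ => prefixVar (t : ℕ) s = a)
              (fun s y => s t = j ∧ ∀ r : Fin T, r < t → y r = x r))
        = ∑ a ∈ Finset.univ.filter (fun a : Fin T → Fin J => prefixVar (t : ℕ) a = a),
          (M.cpr (fun s _ => prefixVar (t : ℕ) s = a)
              (fun s y => s t = j ∧ ∀ r : Fin T, r < t → y r = x r))
            * Real.log (M.cpr (fun s _ => prefixVar (t : ℕ) s = a)
              (fun s y => s t = j ∧ ∀ r : Fin T, r < t → y r = x r)) := by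
          symm
          apply Finset.sum_subset (Finset.filter_subset _ _)
          intro a _ ha
          have hna : ¬ (prefixVar (t : ℕ) a = a) := fun h =>
            ha (Finset.mem_filter.mpr ⟨Finset.mem_univ _, h⟩)
          rw [hpz a hna, zero_mul]
      _ = ∑ p ∈ (Finset.univ : Finset (Fin J)) ×ˢ
            Finset.univ.filter (fun b : Fin T → Fin J => prefixVar ((t : ℕ) - 1) b = b),
          (M.cpr (fun s _ => prefixVar ((t : ℕ) - 1) s = p.2 ∧ s (t - 1) = p.1)
              (fun s y => s t = j ∧ ∀ r : Fin T, r < t → y r = x r))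
            * Real.log (M.cpr (fun s _ => prefixVar ((t : ℕ) - 1) s = p.2 ∧ s (t - 1) = p.1)
              (fun s y => s t = j ∧ ∀ r : Fin T, r < t → y r = x r)) := by
          refine Finset.sum_bij'
            (fun a _ => ((a (t - 1), prefixVar ((t : ℕ) - 1) a) : Fin J × (Fin T → Fin J)))
            (fun p _ => Function.update p.2 (t - 1) p.1) ?_ ?_ ?_ ?_ ?_
          · intro a ha
            exact Finset.mem_product.mpr ⟨Finset.mem_univ _,
              Finset.mem_filter.mpr ⟨Finset.mem_univ _, prefixVar_idem _ _⟩⟩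
          · intro p hp
            have hb : prefixVar ((t : ℕ) - 1) p.2 = p.2 :=
              (Finset.mem_filter.mp (Finset.mem_product.mp hp).2).2
            refine Finset.mem_filter.mpr ⟨Finset.mem_univ _, ?_⟩
            funext r
            simp only [prefixVar]
            by_cases hr : (r : ℕ) < (t : ℕ)
            · rw [if_pos hr]
            · rw [if_neg hr]
              have hrne : r ≠ t - 1 := by
                intro he
                have : (r : ℕ) = ((t - 1 : Fin T) : ℕ) := by rw [he]
                omega
              rw [Function.update_of_ne hrne]
              have hc := congrFun hb r
              simp only [prefixVar] at hc
              rw [if_neg (by omega : ¬ (r : ℕ) < (t : ℕ) - 1)] at hc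
              exact hc
          · intro a ha
            have hv : prefixVar (t : ℕ) a = a := (Finset.mem_filter.mp ha).2
            show Function.update (prefixVar ((t : ℕ) - 1) a) (t - 1) (a (t - 1)) = a
            funext r
            by_cases hre : r = t - 1
            · rw [hre, Function.update_self]
            · rw [Function.update_of_ne hre]
              simp only [prefixVar]
              by_cases hr : (r : ℕ) < (t : ℕ) - 1
              · rw [if_pos hr]
              · rw [if_neg hr]
                have hrv : ¬ (r : ℕ) < (t : ℕ) := by
                  intro hlt
                  exact hre (Fin.ext (by omega))
                have hc := congrFun hv r
                simp only [prefixVar] at hc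
                rw [if_neg hrv] at hc
                exact hc
          · intro p hp
            show ((Function.update p.2 (t - 1) p.1) (t - 1),
              prefixVar ((t : ℕ) - 1) (Function.update p.2 (t - 1) p.1)) = p
            have hb : prefixVar ((t : ℕ) - 1) p.2 = p.2 :=
              (Finset.mem_filter.mp (Finset.mem_product.mp hp).2).2
            have h1' : (Function.update p.2 (t - 1) p.1) (t - 1) = p.1 :=
              Function.update_self _ _ _
            have h2' : prefixVar ((t : ℕ) - 1) (Function.update p.2 (t - 1) p.1) = p.2 := by
              funext r
              simp only [prefixVar]
              by_cases hr : (r : ℕ) < (t : ℕ) - 1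
              · rw [if_pos hr, Function.update_of_ne (by
                  intro he
                  have : (r : ℕ) = ((t - 1 : Fin T) : ℕ) := by rw [he]
                  omega)]
              · rw [if_neg hr]
                have hc := congrFun hb r
                simp only [prefixVar] at hc
                rw [if_neg hr] at hc
                exact hc
            rw [h1', h2']
          · intro a ha
            have hv : prefixVar (t : ℕ) a = a := (Finset.mem_filter.mp ha).2
            have hcc : M.cpr (fun s _ => prefixVar (t : ℕ) s = a)
                  (fun s y => s t = j ∧ ∀ r : Fin T, r < t → y r = x r)
                = M.cpr (fun s _ => prefixVar ((t : ℕ) - 1) s = prefixVar ((t : ℕ) - 1) a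
                    ∧ s (t - 1) = a (t - 1))
                  (fun s y => s t = j ∧ ∀ r : Fin T, r < t → y r = x r) :=
              cpr_congr_left M (fun s _ => hsplit a hv s)
            show (M.cpr (fun s _ => prefixVar (t : ℕ) s = a)
                  (fun s y => s t = j ∧ ∀ r : Fin T, r < t → y r = x r))
                * Real.log (M.cpr (fun s _ => prefixVar (t : ℕ) s = a)
                  (fun s y => s t = j ∧ ∀ r : Fin T, r < t → y r = x r))
              = (M.cpr (fun s _ => prefixVar ((t : ℕ) - 1) s = prefixVar ((t : ℕ) - 1) a
                    ∧ s (t - 1) = a (t - 1))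
                  (fun s y => s t = j ∧ ∀ r : Fin T, r < t → y r = x r))
                * Real.log (M.cpr (fun s _ => prefixVar ((t : ℕ) - 1) s = prefixVar ((t : ℕ) - 1) a
                    ∧ s (t - 1) = a (t - 1))
                  (fun s y => s t = j ∧ ∀ r : Fin T, r < t → y r = x r))
            rw [hcc]
      _ = ∑ i : Fin J,
            ∑ b ∈ Finset.univ.filter (fun b : Fin T → Fin J => prefixVar ((t : ℕ) - 1) b = b),
          (M.cpr (fun s _ => prefixVar ((t : ℕ) - 1) s = b ∧ s (t - 1) = i)
              (fun s y => s t = j ∧ ∀ r : Fin T, r < t → y r = x r))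
            * Real.log (M.cpr (fun s _ => prefixVar ((t : ℕ) - 1) s = b ∧ s (t - 1) = i)
              (fun s y => s t = j ∧ ∀ r : Fin T, r < t → y r = x r)) :=
          Finset.sum_product _ _ _
      _ = ∑ i : Fin J, ∑ b : Fin T → Fin J,
          (M.cpr (fun s _ => prefixVar ((t : ℕ) - 1) s = b ∧ s (t - 1) = i)
              (fun s y => s t = j ∧ ∀ r : Fin T, r < t → y r = x r))
            * Real.log (M.cpr (fun s _ => prefixVar ((t : ℕ) - 1) s = b ∧ s (t - 1) = i)
              (fun s y => s t = j ∧ ∀ r : Fin T, r < t → y r = x r)) := by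
          apply Finset.sum_congr rfl
          intro i _
          apply Finset.sum_subset (Finset.filter_subset _ _)
          intro b _ hb
          have hnb : ¬ (prefixVar ((t : ℕ) - 1) b = b) := fun h =>
            hb (Finset.mem_filter.mpr ⟨Finset.mem_univ _, h⟩)
          rw [hpbz i b hnb, zero_mul]
  -- per-state computation
  have hfinal : ∀ i : Fin J, 0 < q i →
      -∑ b : Fin T → Fin J,
        (M.cpr (fun s _ => prefixVar ((t : ℕ) - 1) s = b ∧ s (t - 1) = i)
            (fun s y => s t = j ∧ ∀ r : Fin T, r < t → y r = x r))
        * Real.log (M.cpr (fun s _ => prefixVar ((t : ℕ) - 1) s = b ∧ s (t - 1) = i)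
            (fun s y => s t = j ∧ ∀ r : Fin T, r < t → y r = x r))
      = q i * (M.condEnt (prefixVar ((t : ℕ) - 1))
            (fun s y => s (t - 1) = i ∧ ∀ r : Fin T, r < t → y r = x r)
          - Real.log (q i)) := by
    intro i hqi
    have hTW : 0 < M.trans i j
        * M.pr (fun s y => s (t - 1) = i ∧ ∀ r : Fin T, r < t → y r = x r) := by
      rw [← hq2 i]; exact mul_pos hqi hlt_pos
    have htpos : 0 < M.trans i j := by
      rcases (M.trans_nonneg i j).lt_or_eq with h | h
      · exact h
      · rw [← h, zero_mul] at hTW; exact absurd hTW (lt_irrefl 0)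
    have hWpos : 0 < M.pr (fun s y => s (t - 1) = i ∧ ∀ r : Fin T, r < t → y r = x r) := by
      rcases (pr_nonneg M (fun s y => s (t - 1) = i ∧ ∀ r : Fin T, r < t → y r = x r)).lt_or_eq
        with h | h
      · exact h
      · rw [← h, mul_zero] at hTW; exact absurd hTW (lt_irrefl 0)
    have hsumR := sum_cpr M (prefixVar ((t : ℕ) - 1))
      (fun s y => s (t - 1) = i ∧ ∀ r : Fin T, r < t → y r = x r) hWpos
    have hPR : ∀ b : Fin T → Fin J,
        M.cpr (fun s _ => prefixVar ((t : ℕ) - 1) s = b ∧ s (t - 1) = i)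
          (fun s y => s t = j ∧ ∀ r : Fin T, r < t → y r = x r)
        = q i * M.cpr (fun s _ => prefixVar ((t : ℕ) - 1) s = b)
          (fun s y => s (t - 1) = i ∧ ∀ r : Fin T, r < t → y r = x r) := by
      intro b
      have hR : M.cpr (fun s _ => prefixVar ((t : ℕ) - 1) s = b)
            (fun s y => s (t - 1) = i ∧ ∀ r : Fin T, r < t → y r = x r)
          * M.pr (fun s y => s (t - 1) = i ∧ ∀ r : Fin T, r < t → y r = x r)
          = M.pr (fun s y => (prefixVar ((t : ℕ) - 1) s = b ∧ s (t - 1) = i)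
              ∧ ∀ r : Fin T, r < t → y r = x r) := by
        simp only [HMCModel.cpr, if_pos hWpos]
        rw [div_mul_cancel₀ _ (ne_of_gt hWpos)]
        exact pr_congr M (fun s y => by tauto)
      apply mul_right_cancel₀ (ne_of_gt hlt_pos)
      rw [hP2 i b]
      calc M.trans i j * M.pr (fun s y => (prefixVar ((t : ℕ) - 1) s = b ∧ s (t - 1) = i)
              ∧ ∀ r : Fin T, r < t → y r = x r)
          = M.trans i j * (M.cpr (fun s _ => prefixVar ((t : ℕ) - 1) s = b)
              (fun s y => s (t - 1) = i ∧ ∀ r : Fin T, r < t → y r = x r)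
            * M.pr (fun s y => s (t - 1) = i ∧ ∀ r : Fin T, r < t → y r = x r)) := by rw [hR]
        _ = M.cpr (fun s _ => prefixVar ((t : ℕ) - 1) s = b)
              (fun s y => s (t - 1) = i ∧ ∀ r : Fin T, r < t → y r = x r)
            * (M.trans i j
              * M.pr (fun s y => s (t - 1) = i ∧ ∀ r : Fin T, r < t → y r = x r)) := by ring
        _ = M.cpr (fun s _ => prefixVar ((t : ℕ) - 1) s = b)
              (fun s y => s (t - 1) = i ∧ ∀ r : Fin T, r < t → y r = x r)
            * (q i * M.pr (fun s y => s t = j ∧ ∀ r : Fin T, r < t → y r = x r)) := by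
              rw [← hq2 i]
        _ = q i * M.cpr (fun s _ => prefixVar ((t : ℕ) - 1) s = b)
              (fun s y => s (t - 1) = i ∧ ∀ r : Fin T, r < t → y r = x r)
            * M.pr (fun s y => s t = j ∧ ∀ r : Fin T, r < t → y r = x r) := by ring
    have hterm : ∀ b : Fin T → Fin J,
        M.cpr (fun s _ => prefixVar ((t : ℕ) - 1) s = b ∧ s (t - 1) = i)
            (fun s y => s t = j ∧ ∀ r : Fin T, r < t → y r = x r)
          * Real.log (M.cpr (fun s _ => prefixVar ((t : ℕ) - 1) s = b ∧ s (t - 1) = i)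
            (fun s y => s t = j ∧ ∀ r : Fin T, r < t → y r = x r))
        = q i * (M.cpr (fun s _ => prefixVar ((t : ℕ) - 1) s = b)
              (fun s y => s (t - 1) = i ∧ ∀ r : Fin T, r < t → y r = x r)
            * Real.log (M.cpr (fun s _ => prefixVar ((t : ℕ) - 1) s = b)
              (fun s y => s (t - 1) = i ∧ ∀ r : Fin T, r < t → y r = x r)))
          + (q i * Real.log (q i))
            * M.cpr (fun s _ => prefixVar ((t : ℕ) - 1) s = b)
              (fun s y => s (t - 1) = i ∧ ∀ r : Fin T, r < t → y r = x r) := by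
      intro b
      rw [hPR b]
      by_cases hRb : M.cpr (fun s _ => prefixVar ((t : ℕ) - 1) s = b)
          (fun s y => s (t - 1) = i ∧ ∀ r : Fin T, r < t → y r = x r) = 0
      · rw [hRb]; simp
      · rw [Real.log_mul (ne_of_gt hqi) hRb]; ring
    simp only [HMCModel.condEnt]
    rw [Finset.sum_congr rfl (fun b _ => hterm b), Finset.sum_add_distrib,
      ← Finset.mul_sum, ← Finset.mul_sum, hsumR, mul_one]
    ring
  have hzero : ∀ i : Fin J, ¬ (0 < q i) → ∀ b : Fin T → Fin J,
      M.cpr (fun s _ => prefixVar ((t : ℕ) - 1) s = b ∧ s (t - 1) = i)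
          (fun s y => s t = j ∧ ∀ r : Fin T, r < t → y r = x r) = 0 := by
    intro i hi b
    have hq0 : q i = 0 := le_antisymm (not_lt.mp hi) (hqnn i)
    have h2 := hP2 i b
    have h0 : M.trans i j
        * M.pr (fun s y => s (t - 1) = i ∧ ∀ r : Fin T, r < t → y r = x r) = 0 := by
      rw [← hq2 i, hq0, zero_mul]
    have hle : M.pr (fun s y => (prefixVar ((t : ℕ) - 1) s = b ∧ s (t - 1) = i)
          ∧ ∀ r : Fin T, r < t → y r = x r)
        ≤ M.pr (fun s y => s (t - 1) = i ∧ ∀ r : Fin T, r < t → y r = x r) :=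
      pr_mono M (fun s y h => ⟨h.1.2, h.2⟩)
    have hzz : M.trans i j
        * M.pr (fun s y => (prefixVar ((t : ℕ) - 1) s = b ∧ s (t - 1) = i)
            ∧ ∀ r : Fin T, r < t → y r = x r) = 0 := by
      apply le_antisymm
      · rw [← h0]
        exact mul_le_mul_of_nonneg_left hle (M.trans_nonneg i j)
      · exact mul_nonneg (M.trans_nonneg i j) (pr_nonneg M _)
    have hz2 : M.cpr (fun s _ => prefixVar ((t : ℕ) - 1) s = b ∧ s (t - 1) = i)
          (fun s y => s t = j ∧ ∀ r : Fin T, r < t → y r = x r)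
        * M.pr (fun s y => s t = j ∧ ∀ r : Fin T, r < t → y r = x r) = 0 := by
      rw [h2, hzz]
    rcases mul_eq_zero.mp hz2 with h | h
    · exact h
    · exact absurd h (ne_of_gt hlt_pos)
  -- assemble
  rw [hLHS]
  simp only [HMCModel.condEnt]
  rw [hreindex]
  rw [← Finset.sum_filter_add_sum_filter_not Finset.univ (fun i : Fin J => 0 < q i)]
  have hz : ∑ i ∈ Finset.univ.filter (fun i : Fin J => ¬ 0 < q i),
      ∑ b : Fin T → Fin J,
        (M.cpr (fun s _ => prefixVar ((t : ℕ) - 1) s = b ∧ s (t - 1) = i)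
            (fun s y => s t = j ∧ ∀ r : Fin T, r < t → y r = x r))
        * Real.log (M.cpr (fun s _ => prefixVar ((t : ℕ) - 1) s = b ∧ s (t - 1) = i)
            (fun s y => s t = j ∧ ∀ r : Fin T, r < t → y r = x r)) = 0 := by
    apply Finset.sum_eq_zero
    intro i hi
    apply Finset.sum_eq_zero
    intro b _
    rw [hzero i (Finset.mem_filter.mp hi).2 b, zero_mul]
  rw [hz, add_zero, neg_eq_iff_eq_neg, ← Finset.sum_neg_distrib]
  apply Finset.sum_congr rfl
  intro i hi
  have hf := hfinal i (Finset.mem_filter.mp hi).2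
  simp only [HMCModel.condEnt] at hf
  linarith [hf]
end
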